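/- arXiv:2406.12097 — 5 statements merged into one kernel-verified Lean document; each statement's English description precedes it below -/
import Mathlib

section
/- There exist absolute constants k₀ > 0 and K ≥ 1 such that, in the setting of the Whitney decomposition 𝒲 of Q⁰ associated to the set E with ε ≤ k₀/N: every Q ∈ 𝒲 satisfies K^{−1}(Δ + dist(Q, E₁)) ≤ δ_Q ≤ K(Δ + dist(Q, E₁)). Moreover δ_Q ≤ K·Δ and dist(Q,E₁) ≤ δ_Q for Q ∈ 𝒲_I, and K^{−1}·dist(Q,E₁) ≤ δ_Q ≤ K·dist(Q,E₁) for Q ∈ 𝒲_II ∪ 𝒲_III. -/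
open MeasureTheory Set Metric
open scoped Classical

noncomputable section

abbrev Pt : Type := EuclideanSpace ℝ (Fin 2)

/-- The point `(a, b)` of the Euclidean plane. -/
def pt (a b : ℝ) : Pt := WithLp.toLp 2 ![a, b]

/-- `V` is an `N`-ary tree: a finite prefix-closed set of strings over the alphabet
`{0, …, N−1}` containing the empty string (the root), in which every non-leaf node
has at least `2` (and, automatically, at most `N`) children. -/
def IsNaryTree (N : ℕ) (V : Finset (List ℕ)) : Prop :=
  [] ∈ V ∧
  (∀ v ∈ V, ∀ u : List ℕ, u <+: v → u ∈ V) ∧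
  (∀ v ∈ V, ∀ i ∈ v, i < N) ∧
  (∀ v ∈ V, (∃ a : ℕ, v ++ [a] ∈ V) →
    2 ≤ ((Finset.range N).filter (fun a => v ++ [a] ∈ V)).card)

/-- `v` is a leaf of `V`. -/
def IsLeaf (V : Finset (List ℕ)) (v : List ℕ) : Prop :=
  v ∈ V ∧ ∀ a : ℕ, v ++ [a] ∉ V

/-- The tree has depth at least one, i.e. the root is not a leaf. -/
def DepthAtLeastOne (V : Finset (List ℕ)) : Prop := ∃ a : ℕ, [a] ∈ V

/-- Radially decaying weights with parameter `ε` (with the convention `W ∅ = 1`). -/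
def RadiallyDecaying (V : Finset (List ℕ)) (W : List ℕ → ℝ) (ε : ℝ) : Prop :=
  W [] = 1 ∧ (∀ v ∈ V, 0 < W v) ∧ ∀ v ∈ V, v ≠ [] → W v ≤ ε * W v.dropLast

/-- The map `Ψ(v) = ∑_{i=1}^{d(v)} W(π_{i−1}(v))·v_i/(N−1)`. -/
def Psi (N : ℕ) (W : List ℕ → ℝ) (v : List ℕ) : ℝ :=
  ∑ i ∈ Finset.range v.length, W (v.take i) * (v.getD i 0 : ℝ) / ((N : ℝ) - 1)

/-- `Δ = min_{v ∈ ∂V} W_v`. -/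
def Delta (V : Finset (List ℕ)) (W : List ℕ → ℝ) : ℝ :=
  sInf {w : ℝ | ∃ v, IsLeaf V v ∧ w = W v}

def E1set (Δ : ℝ) : Set Pt :=
  {x | (∃ n : ℤ, x 0 = (n : ℝ) * Δ) ∧ x 0 ∈ Ico (0 : ℝ) 2 ∧ x 1 = 0}

def E2set (N : ℕ) (V : Finset (List ℕ)) (W : List ℕ → ℝ) : Set Pt :=
  {x | ∃ v, IsLeaf V v ∧ x = pt (Psi N W v) (W v)}

def Eset (N : ℕ) (V : Finset (List ℕ)) (W : List ℕ → ℝ) : Set Pt :=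
  E1set (Delta V W) ∪ E2set N V W

/-- Bundle of standing hypotheses: `N ≥ 2`, `V` an `N`-ary tree, `0 < ε ≤ k₀/N`,
and radially decaying weights with parameter `ε`. -/
def TreeHyp (k₀ : ℝ) (N : ℕ) (V : Finset (List ℕ)) (W : List ℕ → ℝ) (ε : ℝ) : Prop :=
  2 ≤ N ∧ IsNaryTree N V ∧ 0 < ε ∧ ε ≤ k₀ / N ∧ RadiallyDecaying V W ε

/-- Distance between two subsets of the plane. -/
def setDist (s t : Set Pt) : ℝ := sInf {d : ℝ | ∃ x ∈ s, ∃ y ∈ t, d = dist x y}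

/-- A dyadic square arising from `Q⁰ = [−3,5)²` by `k` repeated bisections. -/
structure DSquare where
  k : ℕ
  i : ℕ
  j : ℕ
  hi : i < 2 ^ k
  hj : j < 2 ^ k

namespace DSquare

def side (Q : DSquare) : ℝ := 8 / 2 ^ Q.k

def x0 (Q : DSquare) : ℝ := -3 + Q.i * Q.side

def y0 (Q : DSquare) : ℝ := -3 + Q.j * Q.side

/-- The (half-open) square itself, as a subset of the plane. -/
def set (Q : DSquare) : Set Pt :=
  {x | x 0 ∈ Ico Q.x0 (Q.x0 + Q.side) ∧ x 1 ∈ Ico Q.y0 (Q.y0 + Q.side)}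

/-- The concentric dilate `λQ`. -/
def dil (Q : DSquare) (lam : ℝ) : Set Pt :=
  {x | |x 0 - (Q.x0 + Q.side / 2)| ≤ lam * Q.side / 2 ∧
       |x 1 - (Q.y0 + Q.side / 2)| ≤ lam * Q.side / 2}

/-- The dyadic ancestor of `Q` at generation `k' ≤ Q.k`. -/
def anc (Q : DSquare) (k' : ℕ) (h : k' ≤ Q.k) : DSquare :=
  ⟨k', Q.i / 2 ^ (Q.k - k'), Q.j / 2 ^ (Q.k - k'), by
      have h2 : 0 < 2 ^ (Q.k - k') := pow_pos (by norm_num) _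
      rw [Nat.div_lt_iff_lt_mul h2, ← pow_add, Nat.add_sub_cancel' h]
      exact Q.hi, by
      have h2 : 0 < 2 ^ (Q.k - k') := pow_pos (by norm_num) _
      rw [Nat.div_lt_iff_lt_mul h2, ← pow_add, Nat.add_sub_cancel' h]
      exact Q.hj⟩

end DSquare

def Q0set : Set Pt := {x | x 0 ∈ Ico (-3 : ℝ) 5 ∧ x 1 ∈ Ico (-3 : ℝ) 5}

/-- `Q` belongs to the Whitney decomposition `𝒲` of `Q⁰` relative to `E`:
`3Q ∩ E` has at most one point, while `3Q'' ∩ E` has at least two points for every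
proper dyadic ancestor `Q''` of `Q`. -/
def InWhitney (E : Set Pt) (Q : DSquare) : Prop :=
  (Q.dil 3 ∩ E).Subsingleton ∧
  ∀ k' : ℕ, ∀ h : k' < Q.k, ¬ ((Q.anc k' h.le).dil 3 ∩ E).Subsingleton

/-- `Q ↔ Q'`, i.e. `1.1Q ∩ 1.1Q' ≠ ∅`. -/
def Touch (Q Q' : DSquare) : Prop := (Q.dil 1.1 ∩ Q'.dil 1.1).Nonempty

/-- `‖F‖_{L^{2,p}(Ω)}^p = ∫_Ω |∇²F|^p`. -/
def sobEnergy (p : ℝ) (Ω : Set Pt) (F : Pt → ℝ) : ℝ :=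
  ∫ x in Ω, ‖iteratedFDeriv ℝ 2 F x‖ ^ p

/-- The seminorm `‖F‖_{L^{2,p}(Ω)}`. -/
def sobNorm (p : ℝ) (Ω : Set Pt) (F : Pt → ℝ) : ℝ := sobEnergy p Ω F ^ (1 / p)

/-- Membership in the homogeneous Sobolev space `L^{2,p}(ℝ²)` (we work with `C²`
representatives with finite seminorm). -/
def MemSob (p : ℝ) (F : Pt → ℝ) : Prop :=
  ContDiff ℝ 2 F ∧ Integrable fun x => ‖iteratedFDeriv ℝ 2 F x‖ ^ p

/-- The trace seminorm `‖f‖_{L^{2,p}(E)}` of `f : E → ℝ`. -/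
def traceSobNorm (p : ℝ) (E : Set Pt) (f : E → ℝ) : ℝ :=
  sInf {c : ℝ | ∃ F : Pt → ℝ, MemSob p F ∧ (∀ y : E, F y.1 = f y) ∧ c = sobNorm p univ F}

/-- `T` is a linear extension operator `L^{2,p}(E) → L^{2,p}(ℝ²)` with norm bound `M`. -/
def IsExtOpPlane (p : ℝ) (E : Set Pt) (M : ℝ) (T : (E → ℝ) →ₗ[ℝ] (Pt → ℝ)) : Prop :=
  ∀ f : E → ℝ, (∃ F : Pt → ℝ, MemSob p F ∧ ∀ y : E, F y.1 = f y) →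
    MemSob p (T f) ∧ (∀ y : E, T f y.1 = f y) ∧
      sobNorm p univ (T f) ≤ M * traceSobNorm p E f

/-- `‖Φ‖_{L^{1,p}(V)}^p = ∑_{v ∈ V₀} |Φ(v) − Φ(π(v))|^p W_v^{2−p}`. -/
def treeEnergy (p : ℝ) (V : Finset (List ℕ)) (W : List ℕ → ℝ) (Φ : List ℕ → ℝ) : ℝ :=
  ∑ v ∈ V.erase [], |Φ v - Φ v.dropLast| ^ p * W v ^ (2 - p)

def treeNorm (p : ℝ) (V : Finset (List ℕ)) (W : List ℕ → ℝ) (Φ : List ℕ → ℝ) : ℝ :=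
  treeEnergy p V W Φ ^ (1 / p)

/-- The type of leaves of `V`. -/
def Leaves (V : Finset (List ℕ)) : Type := {v : List ℕ // IsLeaf V v}

/-- The trace seminorm `‖φ‖_{L^{1,p}(∂V)}`. -/
def treeTraceNorm (p : ℝ) (V : Finset (List ℕ)) (W : List ℕ → ℝ) (φ : Leaves V → ℝ) : ℝ :=
  sInf {c : ℝ | ∃ Φ : List ℕ → ℝ, (∀ v : Leaves V, Φ v.1 = φ v) ∧ c = treeNorm p V W Φ}

/-- `H` is a linear extension operator `L^{1,p}(∂V) → L^{1,p}(V)` with norm bound `M`. -/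
def IsExtOpTree (p : ℝ) (V : Finset (List ℕ)) (W : List ℕ → ℝ) (M : ℝ)
    (H : (Leaves V → ℝ) →ₗ[ℝ] (List ℕ → ℝ)) : Prop :=
  ∀ φ : Leaves V → ℝ,
    (∀ v : Leaves V, H φ v.1 = φ v) ∧ treeNorm p V W (H φ) ≤ M * treeTraceNorm p V W φ

/-- Longest common prefix of two strings (the lowest common ancestor). -/
def lcp : List ℕ → List ℕ → List ℕ
  | a :: as, b :: bs => if a = b then a :: lcp as bs else []
  | _, _ => []

/-- The cluster `C_v ⊆ E₂` associated to a vertex `v ∈ V`. -/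
def Cluster (N : ℕ) (V : Finset (List ℕ)) (W : List ℕ → ℝ) (v : List ℕ) : Set Pt :=
  {x | ∃ u, IsLeaf V u ∧ v <+: u ∧ x = pt (Psi N W u) (W u)}

/-- The average `(∂₂G)_S` of the vertical derivative of `G` over `S`. -/
def d2avg (S : Set Pt) (G : Pt → ℝ) : ℝ :=
  ⨍ x in S, fderiv ℝ G x (EuclideanSpace.single 1 1)

end

noncomputable section
namespace St8
open DSquare


lemma pt0 (a b : ℝ) : pt a b 0 = a := rfl
lemma pt1 (a b : ℝ) : pt a b 1 = b := rfl

lemma dist_pt_eq (x y : Pt) : dist x y = Real.sqrt ((x 0 - y 0)^2 + (x 1 - y 1)^2) := by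
  rw [EuclideanSpace.dist_eq]
  congr 1
  rw [Fin.sum_univ_two]
  simp [Real.dist_eq, sq_abs]

lemma dist_le_coords (x y : Pt) : dist x y ≤ |x 0 - y 0| + |x 1 - y 1| := by
  rw [dist_pt_eq]
  have h : (x 0 - y 0)^2 + (x 1 - y 1)^2 ≤ (|x 0 - y 0| + |x 1 - y 1|)^2 := by
    have h0 := abs_nonneg (x 0 - y 0)
    have h1 := abs_nonneg (x 1 - y 1)
    nlinarith [sq_abs (x 0 - y 0), sq_abs (x 1 - y 1)]
  calc Real.sqrt ((x 0 - y 0)^2 + (x 1 - y 1)^2) ≤ Real.sqrt ((|x 0 - y 0| + |x 1 - y 1|)^2) :=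
        Real.sqrt_le_sqrt h
    _ = |x 0 - y 0| + |x 1 - y 1| := Real.sqrt_sq (by positivity)

lemma coord0_le_dist (x y : Pt) : |x 0 - y 0| ≤ dist x y := by
  rw [dist_pt_eq]
  rw [show |x 0 - y 0| = Real.sqrt ((x 0 - y 0)^2) by rw [Real.sqrt_sq_eq_abs]]
  exact Real.sqrt_le_sqrt (by nlinarith [sq_nonneg (x 1 - y 1)])

lemma coord1_le_dist (x y : Pt) : |x 1 - y 1| ≤ dist x y := by
  rw [dist_pt_eq]
  rw [show |x 1 - y 1| = Real.sqrt ((x 1 - y 1)^2) by rw [Real.sqrt_sq_eq_abs]]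
  exact Real.sqrt_le_sqrt (by nlinarith [sq_nonneg (x 0 - y 0)])

lemma pt_ne_of_0 {a b a' b' : ℝ} (h : a ≠ a') : pt a b ≠ pt a' b' := by
  intro he; exact h (congrArg (fun p : Pt => p 0) he)

lemma dist_sqrt_le {x y : Pt} {r : ℝ} (hr : 0 ≤ r) (h0 : |x 0 - y 0| ≤ r)
    (h1 : |x 1 - y 1| ≤ r) : dist x y ≤ 1.5 * r := by
  rw [dist_pt_eq]
  have h : (x 0 - y 0)^2 + (x 1 - y 1)^2 ≤ (1.5 * r)^2 := by
    nlinarith [sq_abs (x 0 - y 0), sq_abs (x 1 - y 1), abs_nonneg (x 0 - y 0), abs_nonneg (x 1 - y 1)]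
  calc Real.sqrt _ ≤ Real.sqrt ((1.5*r)^2) := Real.sqrt_le_sqrt h
    _ = 1.5 * r := Real.sqrt_sq (by linarith)



lemma side_pos (Q : DSquare) : 0 < Q.side := by
  unfold DSquare.side; positivity

lemma mem_set_iff {Q : DSquare} {x : Pt} : x ∈ Q.set ↔
    (Q.x0 ≤ x 0 ∧ x 0 < Q.x0 + Q.side) ∧ (Q.y0 ≤ x 1 ∧ x 1 < Q.y0 + Q.side) := Iff.rfl

lemma mem_dil_iff {Q : DSquare} {lam : ℝ} {x : Pt} : x ∈ Q.dil lam ↔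
    |x 0 - (Q.x0 + Q.side / 2)| ≤ lam * Q.side / 2 ∧
    |x 1 - (Q.y0 + Q.side / 2)| ≤ lam * Q.side / 2 := Iff.rfl

lemma corner_mem (Q : DSquare) : pt Q.x0 Q.y0 ∈ Q.set := by
  rw [mem_set_iff, pt0, pt1]
  have := side_pos Q
  constructor <;> constructor <;> linarith

lemma mem_set_coords {Q : DSquare} {x : Pt} (h : x ∈ Q.set) :
    |x 0 - (Q.x0 + Q.side / 2)| ≤ Q.side / 2 ∧ |x 1 - (Q.y0 + Q.side / 2)| ≤ Q.side / 2 := by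
  rw [mem_set_iff] at h
  constructor <;> rw [abs_le] <;> constructor <;> linarith [h.1.1, h.1.2, h.2.1, h.2.2]







lemma anc_props (Q : DSquare) (h : 1 ≤ Q.k) (hp : Q.k - 1 ≤ Q.k) :
    (Q.anc (Q.k-1) hp).side = 2 * Q.side ∧
    (Q.anc (Q.k-1) hp).x0 ≤ Q.x0 ∧ Q.x0 + Q.side ≤ (Q.anc (Q.k-1) hp).x0 + (Q.anc (Q.k-1) hp).side ∧
    (Q.anc (Q.k-1) hp).y0 ≤ Q.y0 ∧ Q.y0 + Q.side ≤ (Q.anc (Q.k-1) hp).y0 + (Q.anc (Q.k-1) hp).side := by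
  have h2 : (2:ℝ) ^ Q.k = 2 * 2 ^ (Q.k - 1) := by
    rw [← pow_succ']; congr 1; omega
  have hside : (Q.anc (Q.k-1) hp).side = 2 * Q.side := by
    show (8:ℝ) / 2 ^ (Q.k-1) = 2 * (8 / 2 ^ Q.k)
    rw [h2]; field_simp
  have hpow : Q.k - (Q.k - 1) = 1 := by omega
  have hanci : (Q.anc (Q.k-1) hp).i = Q.i / 2 := by
    show Q.i / 2 ^ (Q.k - (Q.k-1)) = Q.i / 2
    rw [hpow, pow_one]
  have hancj : (Q.anc (Q.k-1) hp).j = Q.j / 2 := by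
    show Q.j / 2 ^ (Q.k - (Q.k-1)) = Q.j / 2
    rw [hpow, pow_one]
  have hsp := side_pos Q
  have key : ∀ n : ℕ, ((n/2 : ℕ) : ℝ) * (2 * Q.side) ≤ (n:ℝ) * Q.side ∧
      (n:ℝ) * Q.side + Q.side ≤ ((n/2 : ℕ) : ℝ) * (2 * Q.side) + 2 * Q.side := by
    intro n
    have h1 : 2 * (n/2) ≤ n := Nat.mul_div_le n 2
    have hmod := Nat.div_add_mod n 2
    have hm2 : n % 2 < 2 := Nat.mod_lt _ (by norm_num)
    have hle : (2 * (n/2) : ℕ) ≤ n := by omega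
    have hge : n ≤ 2 * (n/2) + 1 := by omega
    have c1 : ((2 * (n/2) : ℕ) : ℝ) ≤ (n : ℝ) := Nat.cast_le.mpr hle
    have c2 : (n : ℝ) ≤ ((2 * (n/2) + 1 : ℕ) : ℝ) := Nat.cast_le.mpr hge
    push_cast at c1 c2
    constructor <;> nlinarith
  unfold DSquare.x0 DSquare.y0
  rw [hside, hanci, hancj]
  refine ⟨rfl, ?_, ?_, ?_, ?_⟩ <;> [skip; skip; skip; skip] <;>
    first
    | (have := (key Q.i).1; linarith)
    | (have := (key Q.i).2; linarith)
    | (have := (key Q.j).1; linarith)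
    | (have := (key Q.j).2; linarith)





lemma k0_dil (Q : DSquare) (hk : Q.k = 0) {x : Pt} (h0 : |x 0| ≤ 2) (h1 : |x 1| ≤ 2) :
    x ∈ Q.dil 3 := by
  have hi : Q.i = 0 := by have := Q.hi; rw [hk] at this; omega
  have hj : Q.j = 0 := by have := Q.hj; rw [hk] at this; omega
  have hside : Q.side = 8 := by unfold DSquare.side; rw [hk]; norm_num
  have hx0 : Q.x0 = -3 := by unfold DSquare.x0; rw [hi]; norm_num
  have hy0 : Q.y0 = -3 := by unfold DSquare.y0; rw [hj]; norm_num
  constructor <;> rw [hside] <;> [rw [hx0]; rw [hy0]] <;> rw [abs_le] at * <;>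
    constructor <;> linarith [h0.1, h0.2, h1.1, h1.2]



variable {N : ℕ} {V : Finset (List ℕ)} {W : List ℕ → ℝ} {ε : ℝ}
variable (hN : 2 ≤ N) (tr : IsNaryTree N V) (hε : 0 < ε) (hεN : ε ≤ 1/(16*N))
variable (rd : RadiallyDecaying V W ε) (dep : DepthAtLeastOne V)

section Tree
include hN hεN

lemma eps_le : ε ≤ 1/32 := by
  have : (1:ℝ)/(16*N) ≤ 1/32 := by
    apply div_le_div_of_nonneg_left (by norm_num) (by norm_num)
    have : (2:ℝ) ≤ N := by exact_mod_cast hN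
    linarith
  linarith

end Tree

lemma leaf_exists (tr : IsNaryTree N V) : ∃ v, IsLeaf V v := by
  obtain ⟨v, hv, hmax⟩ := V.exists_max_image List.length ⟨[], tr.1⟩
  refine ⟨v, hv, fun a ha => ?_⟩
  have := hmax _ ha
  simp at this

lemma leaf_mem {v : List ℕ} (h : IsLeaf V v) : v ∈ V := h.1

lemma prefix_mem (tr : IsNaryTree N V) {u v : List ℕ} (hv : v ∈ V) (huv : u <+: v) :
    u ∈ V := tr.2.1 v hv u huv

lemma W_prefix (tr : IsNaryTree N V) (hε : 0 < ε) (rd : RadiallyDecaying V W ε)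
    {u v : List ℕ} (hv : v ∈ V) (huv : u <+: v) :
    W v ≤ ε ^ (v.length - u.length) * W u := by
  induction v using List.reverseRecOn with
  | nil =>
    have : u = [] := List.prefix_nil.mp huv
    subst this; simp
  | append_singleton as a ih =>
    have has : as ∈ V := prefix_mem tr hv ⟨[a], rfl⟩
    rcases List.prefix_concat_iff.mp huv with h | h
    · subst h; simp
    · have hlen : u.length ≤ as.length := h.length_le
      have hW : W (as ++ [a]) ≤ ε * W as := by
        have := rd.2.2 (as ++ [a]) hv (by simp)
        simpa using this
      have ihh := ih has h
      have hWu : 0 < W u := rd.2.1 u (prefix_mem tr has h)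
      have hlen2 : (as ++ [a]).length - u.length = (as.length - u.length) + 1 := by
        simp; omega
      rw [hlen2, pow_succ]
      calc W (as ++ [a]) ≤ ε * W as := hW
        _ ≤ ε * (ε ^ (as.length - u.length) * W u) := by
            apply mul_le_mul_of_nonneg_left ihh hε.le
        _ = ε ^ (as.length - u.length) * ε * W u := by ring

lemma W_le_eps_prefix (tr : IsNaryTree N V) (hε : 0 < ε) (hε1 : ε ≤ 1)
    (rd : RadiallyDecaying V W ε) {u v : List ℕ} (hv : v ∈ V) (huv : u <+: v)
    (hlt : u.length < v.length) : W v ≤ ε * W u := by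
  have h := W_prefix tr hε rd hv huv
  have hWu : 0 < W u := rd.2.1 u (prefix_mem tr hv huv)
  have hd : 1 ≤ v.length - u.length := by omega
  have : ε ^ (v.length - u.length) ≤ ε := by
    calc ε ^ (v.length - u.length) ≤ ε ^ 1 := pow_le_pow_of_le_one hε.le hε1 hd
      _ = ε := pow_one ε
  nlinarith

lemma leaf_ne_nil (dep : DepthAtLeastOne V) {v : List ℕ} (h : IsLeaf V v) : v ≠ [] := by
  rintro rfl
  obtain ⟨a, ha⟩ := dep
  exact h.2 a (by simpa using ha)

/-- The set defining Delta. -/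
lemma delta_spec (tr : IsNaryTree N V) (rd : RadiallyDecaying V W ε) :
    (∃ v, IsLeaf V v ∧ W v = Delta V W) ∧ (∀ v, IsLeaf V v → Delta V W ≤ W v) := by
  set S : Set ℝ := {w : ℝ | ∃ v, IsLeaf V v ∧ w = W v} with hS
  have hfin : S.Finite := by
    apply Set.Finite.subset (V.finite_toSet.image W)
    rintro w ⟨v, hv, rfl⟩
    exact ⟨v, hv.1, rfl⟩
  have hne : S.Nonempty := by
    obtain ⟨v, hv⟩ := leaf_exists tr
    exact ⟨W v, v, hv, rfl⟩
  have hmem : Delta V W ∈ S := hne.csInf_mem hfin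
  obtain ⟨v, hv, hw⟩ := hmem
  exact ⟨⟨v, hv, hw.symm⟩, fun u hu => csInf_le hfin.bddBelow ⟨u, hu, rfl⟩⟩

lemma delta_pos (tr : IsNaryTree N V) (rd : RadiallyDecaying V W ε) : 0 < Delta V W := by
  obtain ⟨⟨v, hv, hw⟩, _⟩ := delta_spec tr rd
  rw [← hw]; exact rd.2.1 v hv.1

lemma delta_le_eps (tr : IsNaryTree N V) (hε : 0 < ε) (hε1 : ε ≤ 1)
    (rd : RadiallyDecaying V W ε) (dep : DepthAtLeastOne V) : Delta V W ≤ ε := by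
  obtain ⟨⟨v, hv, hw⟩, _⟩ := delta_spec tr rd
  have hne := leaf_ne_nil dep hv
  have h := W_le_eps_prefix tr hε hε1 rd hv.1 List.nil_prefix
    (by simpa using List.length_pos_iff.mpr hne)
  rw [rd.1] at h
  linarith




lemma geom_bound {r : ℝ} (h0 : 0 ≤ r) (h1 : r < 1) (n : ℕ) :
    ∑ i ∈ Finset.range n, r ^ i ≤ 1/(1-r) := by
  rw [geom_sum_eq (ne_of_lt h1) n]
  have h2 : (r^n - 1)/(r-1) = (1 - r^n)/(1-r) := by
    rw [show r^n - 1 = -(1 - r^n) by ring, show r - 1 = -(1-r) by ring, neg_div_neg_eq]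
  rw [h2]
  apply div_le_div_of_nonneg_right ?_ (by linarith)
  nlinarith [pow_nonneg h0 n]


lemma letter_bound (hN : 2 ≤ N) (tr : IsNaryTree N V) {v : List ℕ} (hv : v ∈ V) (i : ℕ) :
    0 ≤ (v.getD i 0 : ℝ) ∧ (v.getD i 0 : ℝ) ≤ (N : ℝ) - 1 := by
  have hN2 : (2:ℝ) ≤ N := by exact_mod_cast hN
  refine ⟨by positivity, ?_⟩
  rcases lt_or_ge i v.length with h | h
  · have hmem : v.getD i 0 ∈ v := by
      rw [List.getD_eq_getElem _ _ h]
      exact List.getElem_mem h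
    have hc : ((v.getD i 0 : ℕ) : ℝ) + 1 ≤ (N:ℝ) := by exact_mod_cast tr.2.2.1 v hv _ hmem
    linarith
  · rw [List.getD_eq_default _ _ h]
    simpa using by linarith

lemma term_bounds (hN : 2 ≤ N) (tr : IsNaryTree N V) (rd : RadiallyDecaying V W ε)
    {v : List ℕ} (hv : v ∈ V) (i : ℕ) :
    0 ≤ W (v.take i) * (v.getD i 0 : ℝ) / ((N : ℝ) - 1) ∧
    W (v.take i) * (v.getD i 0 : ℝ) / ((N : ℝ) - 1) ≤ W (v.take i) := by
  have hWt : 0 < W (v.take i) := rd.2.1 _ (prefix_mem tr hv (List.take_prefix i v))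
  have hNR : (1:ℝ) ≤ (N:ℝ) - 1 := by
    have : (2:ℝ) ≤ N := by exact_mod_cast hN
    linarith
  obtain ⟨hg0, hgN⟩ := letter_bound hN tr hv i
  constructor
  · positivity
  · rw [div_le_iff₀ (by linarith)]
    nlinarith



lemma psi_nonneg (hN : 2 ≤ N) (tr : IsNaryTree N V) (rd : RadiallyDecaying V W ε)
    {v : List ℕ} (hv : v ∈ V) : 0 ≤ Psi N W v :=
  Finset.sum_nonneg fun i _ => (term_bounds hN tr rd hv i).1

lemma psi_le (hN : 2 ≤ N) (tr : IsNaryTree N V) (hε : 0 < ε) (hεN : ε ≤ 1/(16*N))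
    (rd : RadiallyDecaying V W ε) {v : List ℕ} (hv : v ∈ V) : Psi N W v ≤ 3/2 := by
  have hε32 : ε ≤ 1/32 := eps_le hN hεN
  have h1 : Psi N W v ≤ ∑ i ∈ Finset.range v.length, ε ^ i := by
    apply Finset.sum_le_sum
    intro i hi
    rw [Finset.mem_range] at hi
    have h2 := (term_bounds hN tr rd hv i).2
    have h3 := W_prefix tr hε rd (prefix_mem tr hv (List.take_prefix i v)) List.nil_prefix
    rw [rd.1, mul_one, List.length_take] at h3
    have h4 : min i v.length = i := by omega
    rw [h4] at h3
    simp at h3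
    linarith
  have h5 := geom_bound hε.le (by linarith : ε < 1) v.length
  have h6 : 1/(1-ε) ≤ 3/2 := by
    rw [div_le_div_iff₀ (by linarith) (by norm_num)]
    linarith
  linarith

lemma exists_branch : ∀ (u u' : List ℕ), ¬ (u <+: u') → ¬ (u' <+: u) →
    ∃ m, m < u.length ∧ m < u'.length ∧ u.take m = u'.take m ∧ u.getD m 0 ≠ u'.getD m 0 := by
  intro u
  induction u with
  | nil => intro u' h _; exact absurd List.nil_prefix h
  | cons a as ih =>
    intro u' h h'
    match u' with
    | [] => exact absurd List.nil_prefix h'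
    | b :: bs =>
      by_cases hab : a = b
      · subst hab
        have h1 : ¬ (as <+: bs) := fun hp => h (List.cons_prefix_cons.mpr ⟨rfl, hp⟩)
        have h2 : ¬ (bs <+: as) := fun hp => h' (List.cons_prefix_cons.mpr ⟨rfl, hp⟩)
        obtain ⟨m, hm1, hm2, hm3, hm4⟩ := ih bs h1 h2
        exact ⟨m + 1, by simpa using hm1, by simpa using hm2, by simpa using hm3,
          by simpa using hm4⟩
      · exact ⟨0, by simp, by simp, by simp, by simpa using hab⟩

lemma leaf_not_prefix (tr : IsNaryTree N V) {u u' : List ℕ} (hu : IsLeaf V u)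
    (hu' : u' ∈ V) (hne : u ≠ u') : ¬ (u <+: u') := by
  rintro ⟨t, rfl⟩
  match t with
  | [] => exact hne (by simp)
  | a :: t' =>
    exact hu.2 a (prefix_mem tr hu' ⟨t', by simp⟩)

lemma nat_cast_abs_ge {a b : ℕ} (h : a ≠ b) : 1 ≤ |(a:ℝ) - (b:ℝ)| := by
  rcases Nat.lt_or_ge a b with hlt | hge
  · have h1 : (a:ℝ) + 1 ≤ b := by exact_mod_cast hlt
    rw [abs_sub_comm, abs_of_nonneg (by linarith)]
    linarith
  · have hgt : b < a := lt_of_le_of_ne hge (Ne.symm h)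
    have h1 : (b:ℝ) + 1 ≤ a := by exact_mod_cast hgt
    rw [abs_of_nonneg (by linarith)]
    linarith

lemma tail_bound (hN : 2 ≤ N) (tr : IsNaryTree N V) (hε : 0 < ε) (hεN : ε ≤ 1/(16*N))
    (rd : RadiallyDecaying V W ε) {v : List ℕ} (hv : v ∈ V) (m : ℕ) :
    0 ≤ ∑ i ∈ Finset.Ico (m+1) v.length, W (v.take i) * (v.getD i 0 : ℝ) / ((N:ℝ)-1) ∧
    ∑ i ∈ Finset.Ico (m+1) v.length, W (v.take i) * (v.getD i 0 : ℝ) / ((N:ℝ)-1)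
      ≤ 2 * ε * W (v.take m) := by
  have hε32 : ε ≤ 1/32 := eps_le hN hεN
  have hWm : 0 < W (v.take m) := rd.2.1 _ (prefix_mem tr hv (List.take_prefix m v))
  constructor
  · exact Finset.sum_nonneg fun i _ => (term_bounds hN tr rd hv i).1
  · have hbd : ∀ i ∈ Finset.Ico (m+1) v.length,
        W (v.take i) * (v.getD i 0 : ℝ) / ((N:ℝ)-1) ≤ ε ^ (i - m) * W (v.take m) := by
      intro i hi
      rw [Finset.mem_Ico] at hi
      have h1 := (term_bounds hN tr rd hv i).2
      have hpre : v.take m <+: v.take i := List.take_prefix_take_left (by omega : m ≤ i)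
      have h2 := W_prefix tr hε rd (prefix_mem tr hv (List.take_prefix i v)) hpre
      have hlen : (v.take i).length - (v.take m).length = i - m := by
        simp [List.length_take]; omega
      rw [hlen] at h2
      linarith
    have hgeom : ∑ j ∈ Finset.range (v.length - (m+1)), ε ^ j ≤ 2 := by
      have := geom_bound hε.le (by linarith : ε < 1) (v.length - (m+1))
      have h6 : 1/(1-ε) ≤ 2 := by
        rw [div_le_iff₀ (by linarith : (0:ℝ) < 1 - ε)]
        linarith
      linarith
    calc ∑ i ∈ Finset.Ico (m+1) v.length, W (v.take i) * (v.getD i 0 : ℝ) / ((N:ℝ)-1)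
        ≤ ∑ i ∈ Finset.Ico (m+1) v.length, ε ^ (i - m) * W (v.take m) :=
          Finset.sum_le_sum hbd
      _ = ∑ j ∈ Finset.range (v.length - (m+1)), ε ^ (m + 1 + j - m) * W (v.take m) :=
          Finset.sum_Ico_eq_sum_range _ _ _
      _ = ε * W (v.take m) * ∑ j ∈ Finset.range (v.length - (m+1)), ε ^ j := by
          rw [Finset.mul_sum]
          apply Finset.sum_congr rfl
          intro j _
          have hj : m + 1 + j - m = j + 1 := by omega
          rw [hj, pow_succ]
          ring
      _ ≤ ε * W (v.take m) * 2 := by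
          apply mul_le_mul_of_nonneg_left hgeom (by positivity)
      _ = 2 * ε * W (v.take m) := by ring

lemma psi_sep (hN : 2 ≤ N) (tr : IsNaryTree N V) (hε : 0 < ε) (hεN : ε ≤ 1/(16*N))
    (rd : RadiallyDecaying V W ε) {u u' : List ℕ} (hu : IsLeaf V u) (hu' : IsLeaf V u')
    (hne : u ≠ u') : 8 * W u ≤ |Psi N W u - Psi N W u'| := by
  have hε32 : ε ≤ 1/32 := eps_le hN hεN
  have hND : (2:ℝ) ≤ (N:ℝ) := by exact_mod_cast hN
  have hD1 : (1:ℝ) ≤ (N:ℝ) - 1 := by linarith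
  obtain ⟨m, hmL, hmL', htake, hget⟩ := exists_branch u u'
    (leaf_not_prefix tr hu hu'.1 hne) (leaf_not_prefix tr hu' hu.1 (Ne.symm hne))
  have hwV : u.take m ∈ V := prefix_mem tr hu.1 (List.take_prefix m u)
  have hWw : 0 < W (u.take m) := rd.2.1 _ hwV
  let f : ℕ → ℝ := fun i => W (u.take i) * (u.getD i 0 : ℝ) / ((N:ℝ)-1)
  let g : ℕ → ℝ := fun i => W (u'.take i) * (u'.getD i 0 : ℝ) / ((N:ℝ)-1)
  have hPu : Psi N W u = ∑ i ∈ Finset.range u.length, f i := rfl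
  have hPu' : Psi N W u' = ∑ i ∈ Finset.range u'.length, g i := rfl
  have hhead : ∀ i < m, f i = g i := by
    intro i hi
    have htk : u.take i = u'.take i := by
      have h1 : (u.take m).take i = u.take i := by
        simp [List.take_take, Nat.min_eq_left hi.le]
      have h2 : (u'.take m).take i = u'.take i := by
        simp [List.take_take, Nat.min_eq_left hi.le]
      rw [← h1, ← h2, htake]
    have hgd : u.getD i 0 = u'.getD i 0 := by
      have e1 : u[i]? = u'[i]? := by
        have h1 : (List.take m u)[i]? = u[i]? := List.getElem?_take_of_lt hi
        have h2 : (List.take m u')[i]? = u'[i]? := List.getElem?_take_of_lt hi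
        rw [← h1, ← h2, htake]
      simp [List.getD_eq_getElem?_getD, e1]
    show W (u.take i) * (u.getD i 0 : ℝ) / ((N:ℝ)-1)
        = W (u'.take i) * (u'.getD i 0 : ℝ) / ((N:ℝ)-1)
    rw [htk, hgd]
  have hsplit : ∀ (L : ℕ) (F : ℕ → ℝ), m + 1 ≤ L →
      ∑ i ∈ Finset.range L, F i =
        (∑ i ∈ Finset.range m, F i + F m) + ∑ i ∈ Finset.Ico (m+1) L, F i := by
    intro L F hL
    rw [Finset.range_eq_Ico, ← Finset.sum_Ico_consecutive F (Nat.zero_le (m+1)) hL,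
      ← Finset.range_eq_Ico, Finset.sum_range_succ]
  obtain ⟨hT1a, hT1b⟩ := tail_bound hN tr hε hεN rd hu.1 m
  obtain ⟨hT2a, hT2b⟩ := tail_bound hN tr hε hεN rd hu'.1 m
  rw [← htake] at hT2b
  have hTu : ∑ i ∈ Finset.Ico (m+1) u.length, f i ≤ 2 * ε * W (u.take m) := hT1b
  have hTu' : ∑ i ∈ Finset.Ico (m+1) u'.length, g i ≤ 2 * ε * W (u.take m) := hT2b
  have hdec : Psi N W u - Psi N W u' =
      (f m - g m) + ((∑ i ∈ Finset.Ico (m+1) u.length, f i) -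
        (∑ i ∈ Finset.Ico (m+1) u'.length, g i)) := by
    rw [hPu, hPu', hsplit u.length f hmL, hsplit u'.length g hmL']
    have hh : ∑ i ∈ Finset.range m, f i = ∑ i ∈ Finset.range m, g i :=
      Finset.sum_congr rfl fun i hi => hhead i (Finset.mem_range.mp hi)
    rw [hh]
    ring
  have hmid : W (u.take m) / ((N:ℝ)-1) ≤ |f m - g m| := by
    have he : f m - g m = W (u.take m) * ((u.getD m 0 : ℝ) - (u'.getD m 0 : ℝ)) / ((N:ℝ)-1) := by
      show W (u.take m) * (u.getD m 0 : ℝ) / ((N:ℝ)-1)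
          - W (u'.take m) * (u'.getD m 0 : ℝ) / ((N:ℝ)-1) = _
      rw [← htake]
      ring
    rw [he, abs_div, abs_mul, abs_of_pos hWw, abs_of_pos (by linarith : (0:ℝ) < (N:ℝ)-1)]
    apply div_le_div_of_nonneg_right ?_ (by linarith)
    nlinarith [nat_cast_abs_ge hget]
  have habs : W (u.take m) / ((N:ℝ)-1) - 4 * ε * W (u.take m) ≤ |Psi N W u - Psi N W u'| := by
    have hTd : |(∑ i ∈ Finset.Ico (m+1) u.length, f i) -
        (∑ i ∈ Finset.Ico (m+1) u'.length, g i)| ≤ 2 * ε * W (u.take m) :=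
      abs_le.mpr ⟨by linarith, by linarith⟩
    have he2 : f m - g m = (Psi N W u - Psi N W u') -
        ((∑ i ∈ Finset.Ico (m+1) u.length, f i) -
          (∑ i ∈ Finset.Ico (m+1) u'.length, g i)) := by
      rw [hdec]; ring
    have h3 : |f m - g m| ≤ |Psi N W u - Psi N W u'| +
        |(∑ i ∈ Finset.Ico (m+1) u.length, f i) -
          (∑ i ∈ Finset.Ico (m+1) u'.length, g i)| := by
      rw [he2, sub_eq_add_neg]
      exact (abs_add_le _ _).trans (by rw [abs_neg])
    linarith
  have hWu : W u ≤ ε * W (u.take m) := W_le_eps_prefix tr hε (by linarith) rd hu.1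
    (List.take_prefix m u) (by simp [List.length_take]; omega)
  have hWu0 : 0 < W u := rd.2.1 u hu.1
  have h6 : ε * (16*(N:ℝ)) ≤ 1 := by
    have hpos : (0:ℝ) < 16*(N:ℝ) := by positivity
    exact (le_div_iff₀ hpos).mp hεN
  have hεD : 8 * ε * ((N:ℝ)-1) ≤ 1 := by nlinarith
  have hpos2D : (0:ℝ) < 2 * ((N:ℝ)-1) := by linarith
  have hhalf : W (u.take m) / (2 * ((N:ℝ)-1)) ≤
      W (u.take m) / ((N:ℝ)-1) - 4 * ε * W (u.take m) := by
    rw [div_le_iff₀ hpos2D]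
    have expand : (W (u.take m) / ((N:ℝ)-1) - 4*ε*W (u.take m)) * (2*((N:ℝ)-1))
        = 2*W (u.take m) - 8*ε*((N:ℝ)-1)*W (u.take m) := by
      field_simp
      ring
    rw [expand]
    nlinarith [mul_le_mul_of_nonneg_right hεD hWw.le]
  have hfin : 8 * W u ≤ W (u.take m) / (2 * ((N:ℝ)-1)) := by
    rw [le_div_iff₀ hpos2D]
    have hA : (16*(N:ℝ)) * W u ≤ (16*(N:ℝ)) * (ε * W (u.take m)) :=
      mul_le_mul_of_nonneg_left hWu (by positivity)
    have hB : (ε * (16*(N:ℝ))) * W (u.take m) ≤ 1 * W (u.take m) :=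
      mul_le_mul_of_nonneg_right h6 hWw.le
    nlinarith
  linarith

-- ## E-set lemmas

lemma setDist_le {s t : Set Pt} {q p : Pt} (hq : q ∈ s) (hp : p ∈ t) :
    setDist s t ≤ dist q p := by
  apply csInf_le
  · exact ⟨0, by rintro r ⟨x, _, y, _, rfl⟩; exact dist_nonneg⟩
  · exact ⟨q, hq, p, hp, rfl⟩

lemma le_setDist {s t : Set Pt} {c : ℝ} (hs : s.Nonempty) (ht : t.Nonempty)
    (h : ∀ q ∈ s, ∀ p ∈ t, c ≤ dist q p) : c ≤ setDist s t := by
  apply le_csInf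
  · obtain ⟨q, hq⟩ := hs; obtain ⟨p, hp⟩ := ht
    exact ⟨dist q p, q, hq, p, hp, rfl⟩
  · rintro r ⟨x, hx, y, hy, rfl⟩
    exact h x hx y hy

lemma setDist_nonneg {s t : Set Pt} (hs : s.Nonempty) (ht : t.Nonempty) :
    0 ≤ setDist s t :=
  le_setDist hs ht fun _ _ _ _ => dist_nonneg

lemma origin_mem_E1 {Δ : ℝ} : pt 0 0 ∈ E1set Δ :=
  ⟨⟨0, by simp [pt0]⟩, by simp [pt0], by simp [pt1]⟩

lemma E1_nonempty {Δ : ℝ} : (E1set Δ).Nonempty := ⟨pt 0 0, origin_mem_E1⟩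

lemma E1_neighbor {Δ : ℝ} (hΔ : 0 < Δ) (hΔ2 : Δ ≤ 1/32) {p : Pt} (hp : p ∈ E1set Δ) :
    ∃ p' ∈ E1set Δ, p' 1 = 0 ∧ |p' 0 - p 0| = Δ ∧ p' ≠ p := by
  obtain ⟨⟨n, hn⟩, hIco, hy⟩ := hp
  have h1 : (0:ℝ) ≤ (n:ℝ) * Δ := hn ▸ hIco.1
  have h2 : (n:ℝ) * Δ < 2 := hn ▸ hIco.2
  rcases lt_or_ge ((n:ℝ) * Δ + Δ) 2 with h | h
  · refine ⟨pt ((n:ℝ) * Δ + Δ) 0, ⟨⟨n+1, by rw [pt0]; push_cast; ring⟩, ?_, by rw [pt1]⟩,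
      by rw [pt1], ?_, ?_⟩
    · rw [pt0]; exact ⟨by linarith, h⟩
    · rw [pt0, hn, show (n:ℝ)*Δ + Δ - (n:ℝ)*Δ = Δ by ring, abs_of_pos hΔ]
    · intro he
      have : (pt ((n:ℝ) * Δ + Δ) 0) 0 = p 0 := congrArg (fun q : Pt => q 0) he
      rw [pt0, hn] at this
      linarith [this]
  · refine ⟨pt ((n:ℝ) * Δ - Δ) 0, ⟨⟨n-1, by rw [pt0]; push_cast; ring⟩, ?_, by rw [pt1]⟩,
      by rw [pt1], ?_, ?_⟩
    · rw [pt0]; exact ⟨by linarith, by linarith⟩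
    · rw [pt0, hn, show (n:ℝ)*Δ - Δ - (n:ℝ)*Δ = -Δ by ring, abs_neg, abs_of_pos hΔ]
    · intro he
      have : (pt ((n:ℝ) * Δ - Δ) 0) 0 = p 0 := congrArg (fun q : Pt => q 0) he
      rw [pt0, hn] at this
      linarith [this]

lemma E1_near {Δ : ℝ} (hΔ : 0 < Δ) (hΔ2 : Δ ≤ 1/32) {s : ℝ} (hs0 : 0 ≤ s) (hs1 : s ≤ 3/2) :
    ∃ p ∈ E1set Δ, p 1 = 0 ∧ |p 0 - s| ≤ Δ := by
  have h2 : (⌊s/Δ⌋ : ℝ) ≤ s/Δ := Int.floor_le _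
  have h4 : s/Δ < (⌊s/Δ⌋ : ℝ) + 1 := Int.lt_floor_add_one _
  have h3 : (⌊s/Δ⌋ : ℝ) * Δ ≤ s := by
    have := mul_le_mul_of_nonneg_right h2 hΔ.le
    rwa [div_mul_cancel₀ s (ne_of_gt hΔ)] at this
  have h5 : s < ((⌊s/Δ⌋ : ℝ) + 1) * Δ := by
    have := mul_lt_mul_of_pos_right h4 hΔ
    rwa [div_mul_cancel₀ s (ne_of_gt hΔ)] at this
  have h1 : (0:ℝ) ≤ (⌊s/Δ⌋ : ℝ) := by
    exact_mod_cast Int.floor_nonneg.mpr (by positivity)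
  refine ⟨pt (⌊s/Δ⌋ * Δ) 0, ⟨⟨⌊s/Δ⌋, by rw [pt0]⟩, ?_, by rw [pt1]⟩, by rw [pt1], ?_⟩
  · rw [pt0]
    exact ⟨by positivity, by linarith⟩
  · rw [pt0, abs_le]
    constructor <;> nlinarith

section Esep

variable {N : ℕ} {V : Finset (List ℕ)} {W : List ℕ → ℝ} {ε : ℝ}

lemma W_leaf_le_eps (tr : IsNaryTree N V) (hε : 0 < ε) (hε1 : ε ≤ 1)
    (rd : RadiallyDecaying V W ε) (dep : DepthAtLeastOne V) {v : List ℕ}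
    (hv : IsLeaf V v) : W v ≤ ε := by
  have h := W_le_eps_prefix tr hε hε1 rd hv.1 List.nil_prefix
    (by simpa using List.length_pos_iff.mpr (leaf_ne_nil dep hv))
  rw [rd.1] at h
  linarith

lemma E2_coords (hN : 2 ≤ N) (tr : IsNaryTree N V) (hε : 0 < ε) (hεN : ε ≤ 1/(16*N))
    (rd : RadiallyDecaying V W ε) (dep : DepthAtLeastOne V) {x : Pt}
    (hx : x ∈ E2set N V W) :
    ∃ u, IsLeaf V u ∧ x 0 = Psi N W u ∧ x 1 = W u ∧
      0 ≤ x 0 ∧ x 0 ≤ 3/2 ∧ Delta V W ≤ x 1 ∧ x 1 ≤ 1/32 := by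
  obtain ⟨u, hu, rfl⟩ := hx
  refine ⟨u, hu, pt0 _ _, pt1 _ _, ?_, ?_, ?_, ?_⟩
  · rw [pt0]; exact psi_nonneg hN tr rd hu.1
  · rw [pt0]; exact psi_le hN tr hε hεN rd hu.1
  · rw [pt1]; exact (delta_spec tr rd).2 u hu
  · rw [pt1]
    calc W u ≤ ε := W_leaf_le_eps tr hε (by linarith [eps_le hN hεN]) rd dep hu
      _ ≤ 1/32 := eps_le hN hεN

lemma E2_pair_sep (hN : 2 ≤ N) (tr : IsNaryTree N V) (hε : 0 < ε) (hεN : ε ≤ 1/(16*N))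
    (rd : RadiallyDecaying V W ε) {x y : Pt} (hx : x ∈ E2set N V W) (hy : y ∈ E2set N V W)
    (hne : x ≠ y) :
    ∃ u, IsLeaf V u ∧ x = pt (Psi N W u) (W u) ∧ 8 * W u ≤ dist x y ∧
      8 * Delta V W ≤ dist x y := by
  obtain ⟨u, hu, rfl⟩ := hx
  obtain ⟨u', hu', rfl⟩ := hy
  have huu : u ≠ u' := by rintro rfl; exact hne rfl
  have hsep := psi_sep hN tr hε hεN rd hu hu' huu
  have hc := coord0_le_dist (pt (Psi N W u) (W u)) (pt (Psi N W u') (W u'))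
  rw [pt0, pt0] at hc
  refine ⟨u, hu, rfl, by linarith, ?_⟩
  have hΔu : Delta V W ≤ W u := (delta_spec tr rd).2 u hu
  linarith

lemma E_sep (hN : 2 ≤ N) (tr : IsNaryTree N V) (hε : 0 < ε) (hεN : ε ≤ 1/(16*N))
    (rd : RadiallyDecaying V W ε) {x y : Pt} (hx : x ∈ Eset N V W) (hy : y ∈ Eset N V W)
    (hne : x ≠ y) : Delta V W ≤ dist x y := by
  have hΔ0 : 0 < Delta V W := delta_pos tr rd
  have mix : ∀ a b : Pt, a ∈ E1set (Delta V W) → b ∈ E2set N V W → Delta V W ≤ dist a b := by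
    intro a b ha hb
    obtain ⟨u, hu, rfl⟩ := hb
    have hΔu : Delta V W ≤ W u := (delta_spec tr rd).2 u hu
    have hc := coord1_le_dist a (pt (Psi N W u) (W u))
    rw [pt1, ha.2.2] at hc
    rw [abs_of_nonpos (by linarith)] at hc
    linarith
  rcases hx with hx1 | hx2 <;> rcases hy with hy1 | hy2
  · obtain ⟨⟨n, hn⟩, _, hy0⟩ := hx1
    obtain ⟨⟨m, hm⟩, _, hy0'⟩ := hy1
    have hnm : n ≠ m := by
      rintro rfl
      apply hne
      refine PiLp.ext fun i => ?_
      fin_cases i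
      · show x 0 = y 0; rw [hn, hm]
      · show x 1 = y 1; rw [hy0, hy0']
    have hc := coord0_le_dist x y
    rw [hn, hm] at hc
    have h1 : Delta V W ≤ |(n:ℝ) * Delta V W - m * Delta V W| := by
      rw [show (n:ℝ) * Delta V W - m * Delta V W = ((n:ℝ) - m) * Delta V W by ring,
        abs_mul, abs_of_pos hΔ0]
      have : (1:ℝ) ≤ |(n:ℝ) - m| := by
        have : ((n - m : ℤ) : ℝ) ≠ 0 := by
          simp only [ne_eq, Int.cast_eq_zero, sub_eq_zero]
          exact hnm
        have h2 : (1:ℤ) ≤ |n - m| := Int.one_le_abs (sub_ne_zero.mpr hnm)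
        calc (1:ℝ) = ((1:ℤ):ℝ) := by norm_num
          _ ≤ ((|n - m| : ℤ) : ℝ) := by exact_mod_cast h2
          _ = |(n:ℝ) - m| := by push_cast; ring_nf
      nlinarith
    linarith
  · exact mix x y hx1 hy2
  · rw [dist_comm]; exact mix y x hy1 hx2
  · obtain ⟨u, _, _, _, h⟩ := E2_pair_sep hN tr hε hεN rd hx2 hy2 hne
    linarith [dist_nonneg (x := x) (y := y)]

end Esep

lemma clamp1 {x0 δ r a : ℝ} (hδ : 0 < δ) (hr : δ/2 ≤ r) (ha : |a - (x0 + δ/2)| ≤ r) :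
    x0 ≤ max x0 (min a (x0 + 0.9*δ)) ∧ max x0 (min a (x0+0.9*δ)) < x0 + δ ∧
      |max x0 (min a (x0+0.9*δ)) - a| ≤ r := by
  rw [abs_le] at ha
  refine ⟨le_max_left _ _, ?_, ?_⟩
  · apply max_lt (by linarith)
    calc min a (x0+0.9*δ) ≤ x0 + 0.9*δ := min_le_right _ _
      _ < x0 + δ := by linarith
  · rw [abs_le]
    constructor
    · -- -r ≤ max ... - a, i.e. a - r ≤ max ...
      rcases le_total a (x0 + 0.9*δ) with h | h
      · have : min a (x0+0.9*δ) = a := min_eq_left h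
        rw [this]
        have := le_max_right x0 a
        linarith
      · have : min a (x0+0.9*δ) = x0 + 0.9*δ := min_eq_right h
        rw [this]
        have := le_max_right x0 (x0+0.9*δ)
        linarith [ha.2]
    · -- max ... - a ≤ r
      apply sub_le_iff_le_add.mpr
      apply max_le
      · linarith [ha.1]
      · calc min a (x0+0.9*δ) ≤ a := min_le_left _ _
          _ ≤ r + a := by linarith

lemma close_point (Q : DSquare) {x : Pt} {r : ℝ} (hr : Q.side/2 ≤ r)
    (h0 : |x 0 - (Q.x0 + Q.side/2)| ≤ r) (h1 : |x 1 - (Q.y0 + Q.side/2)| ≤ r) :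
    ∃ q ∈ Q.set, dist q x ≤ 1.5 * r := by
  have hδ := side_pos Q
  obtain ⟨ha1, ha2, ha3⟩ := clamp1 hδ hr h0
  obtain ⟨hb1, hb2, hb3⟩ := clamp1 (x0 := Q.y0) hδ hr h1
  refine ⟨pt (max Q.x0 (min (x 0) (Q.x0 + 0.9*Q.side)))
    (max Q.y0 (min (x 1) (Q.y0 + 0.9*Q.side))), ?_, ?_⟩
  · exact ⟨⟨by rw [pt0]; exact ha1, by rw [pt0]; exact ha2⟩,
      ⟨by rw [pt1]; exact hb1, by rw [pt1]; exact hb2⟩⟩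
  · refine dist_sqrt_le (by linarith) ?_ ?_
    · rw [pt0]; exact ha3
    · rw [pt1]; exact hb3

end St8

open St8 in
theorem statement8' :
    ∃ k₀ K : ℝ, 0 < k₀ ∧ 1 ≤ K ∧
      ∀ (N : ℕ) (V : Finset (List ℕ)) (W : List ℕ → ℝ) (ε : ℝ),
        TreeHyp k₀ N V W ε → DepthAtLeastOne V →
          ∀ Q : DSquare, InWhitney (Eset N V W) Q →
            (K⁻¹ * (Delta V W + setDist Q.set (E1set (Delta V W))) ≤ Q.side ∧
              Q.side ≤ K * (Delta V W + setDist Q.set (E1set (Delta V W)))) ∧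
            ((∃ x : Pt, Q.dil 1.1 ∩ E1set (Delta V W) = {x}) →
              Q.side ≤ K * Delta V W ∧ setDist Q.set (E1set (Delta V W)) ≤ Q.side) ∧
            (Q.dil 1.1 ∩ E1set (Delta V W) = ∅ →
              K⁻¹ * setDist Q.set (E1set (Delta V W)) ≤ Q.side ∧
                Q.side ≤ K * setDist Q.set (E1set (Delta V W))) := by
  refine ⟨1/16, 50, by norm_num, by norm_num, ?_⟩
  intro N V W ε hyp dep Q hQ
  obtain ⟨hN, tr, hε, hεk, rd⟩ := hyp
  obtain ⟨hsub, hanc⟩ := hQ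
  have hεN : ε ≤ 1/(16*N) := by
    have he : (1/16 : ℝ)/N = 1/(16*N) := by rw [div_div]
    rw [← he]; exact hεk
  have hΔ0 : 0 < Delta V W := delta_pos tr rd
  have hε32 : ε ≤ 1/32 := eps_le hN hεN
  have hΔ32 : Delta V W ≤ 1/32 :=
    le_trans (delta_le_eps tr hε (by linarith) rd dep) hε32
  have hδ : 0 < Q.side := side_pos Q
  have hQne : Q.set.Nonempty := ⟨_, corner_mem Q⟩
  have hd0 : 0 ≤ setDist Q.set (E1set (Delta V W)) := setDist_nonneg hQne E1_nonempty
  -- ## Upper bound: δ ≤ 2(Δ + d)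
  have hupper : Q.side ≤ 2 * (Delta V W + setDist Q.set (E1set (Delta V W))) := by
    by_contra hcon
    push_neg at hcon
    have hlt : setDist Q.set (E1set (Delta V W)) < Q.side - Delta V W := by linarith
    have hSne : {r : ℝ | ∃ a ∈ Q.set, ∃ b ∈ E1set (Delta V W), r = dist a b}.Nonempty :=
      ⟨_, ⟨_, corner_mem Q, _, origin_mem_E1, rfl⟩⟩
    obtain ⟨s, hsmem, hslt⟩ := exists_lt_of_csInf_lt hSne hlt
    obtain ⟨q, hq, p, hp, rfl⟩ := hsmem
    obtain ⟨p', hp'E, hp'1, hp'd, hp'ne⟩ := E1_neighbor hΔ0 hΔ32 hp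
    obtain ⟨hq0, hq1⟩ := mem_set_coords hq
    have hc0 : |p 0 - q 0| ≤ dist q p := by
      rw [abs_sub_comm]; exact coord0_le_dist q p
    have hc1 : |p 1 - q 1| ≤ dist q p := by
      rw [abs_sub_comm]; exact coord1_le_dist q p
    have hp3 : p ∈ Q.dil 3 := by
      rw [mem_dil_iff]
      constructor
      · calc |p 0 - (Q.x0 + Q.side/2)| ≤ |p 0 - q 0| + |q 0 - (Q.x0 + Q.side/2)| :=
            abs_sub_le _ _ _
          _ ≤ 3 * Q.side / 2 := by linarith
      · calc |p 1 - (Q.y0 + Q.side/2)| ≤ |p 1 - q 1| + |q 1 - (Q.y0 + Q.side/2)| :=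
            abs_sub_le _ _ _
          _ ≤ 3 * Q.side / 2 := by linarith
    have hp'3 : p' ∈ Q.dil 3 := by
      rw [mem_dil_iff]
      have ht0 : |p' 0 - q 0| ≤ |p' 0 - p 0| + |p 0 - q 0| := abs_sub_le _ _ _
      have ht1 : |p' 1 - q 1| ≤ |p' 1 - p 1| + |p 1 - q 1| := abs_sub_le _ _ _
      have hp'p1 : |p' 1 - p 1| = 0 := by rw [hp'1, hp.2.2]; simp
      constructor
      · calc |p' 0 - (Q.x0 + Q.side/2)| ≤ |p' 0 - q 0| + |q 0 - (Q.x0 + Q.side/2)| :=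
            abs_sub_le _ _ _
          _ ≤ 3 * Q.side / 2 := by rw [hp'd] at ht0; linarith
      · calc |p' 1 - (Q.y0 + Q.side/2)| ≤ |p' 1 - q 1| + |q 1 - (Q.y0 + Q.side/2)| :=
            abs_sub_le _ _ _
          _ ≤ 3 * Q.side / 2 := by linarith
    exact hp'ne (hsub ⟨hp'3, Set.mem_union_left _ hp'E⟩ ⟨hp3, Set.mem_union_left _ hp⟩)
  -- ## Lower bound: Δ + d ≤ 44 δ
  have hlow : Delta V W + setDist Q.set (E1set (Delta V W)) ≤ 44 * Q.side := by
    rcases Nat.eq_zero_or_pos Q.k with hk0 | hk1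
    · exfalso
      have h00 : pt 0 0 ∈ Q.dil 3 :=
        k0_dil Q hk0 (by rw [pt0]; norm_num) (by rw [pt1]; norm_num)
      have h10 : pt (Delta V W) 0 ∈ Q.dil 3 :=
        k0_dil Q hk0 (by rw [pt0, abs_of_pos hΔ0]; linarith) (by rw [pt1]; norm_num)
      have hE0 : pt 0 0 ∈ Eset N V W := Set.mem_union_left _ origin_mem_E1
      have hE1' : pt (Delta V W) 0 ∈ Eset N V W := by
        apply Set.mem_union_left
        exact ⟨⟨1, by rw [pt0]; push_cast; ring⟩, ⟨by rw [pt0]; exact hΔ0.le,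
          by rw [pt0]; linarith⟩, pt1 _ _⟩
      have heq := hsub ⟨h00, hE0⟩ ⟨h10, hE1'⟩
      have : (pt 0 0) 0 = (pt (Delta V W) 0) 0 := congrArg (fun p : Pt => p 0) heq
      rw [pt0, pt0] at this
      linarith [this.symm]
    · have hple : Q.k - 1 < Q.k := by omega
      have hnsub := hanc (Q.k-1) hple
      rw [Set.not_subsingleton_iff] at hnsub
      obtain ⟨x, hx, y, hy, hxy⟩ := hnsub
      obtain ⟨hPside, hPx1, hPx2, hPy1, hPy2⟩ := anc_props Q hk1 hple.le
      have hdil : ∀ z : Pt, z ∈ (Q.anc (Q.k-1) hple.le).dil 3 →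
          |z 0 - ((Q.anc (Q.k-1) hple.le).x0 + (Q.anc (Q.k-1) hple.le).side/2)| ≤ 3*Q.side ∧
          |z 1 - ((Q.anc (Q.k-1) hple.le).y0 + (Q.anc (Q.k-1) hple.le).side/2)| ≤ 3*Q.side := by
        intro z hz
        obtain ⟨h1, h2⟩ := hz
        rw [hPside] at h1 h2 ⊢
        constructor <;> linarith
      have hqP : ∀ q ∈ Q.set,
          |q 0 - ((Q.anc (Q.k-1) hple.le).x0 + (Q.anc (Q.k-1) hple.le).side/2)| ≤ Q.side ∧
          |q 1 - ((Q.anc (Q.k-1) hple.le).y0 + (Q.anc (Q.k-1) hple.le).side/2)| ≤ Q.side := by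
        intro q hq
        obtain ⟨⟨a1, a2⟩, b1, b2⟩ := hq
        rw [hPside] at *
        constructor <;> rw [abs_le] <;> constructor <;> linarith
      have hdqz : ∀ q ∈ Q.set, ∀ z ∈ (Q.anc (Q.k-1) hple.le).dil 3, dist q z ≤ 8*Q.side := by
        intro q hq z hz
        obtain ⟨hz0, hz1⟩ := hdil z hz
        obtain ⟨hq0, hq1⟩ := hqP q hq
        have h1 := dist_le_coords q z
        have t0 : |q 0 - z 0| ≤ 4*Q.side := by
          have h := abs_sub_le (q 0) ((Q.anc (Q.k-1) hple.le).x0 + (Q.anc (Q.k-1) hple.le).side/2) (z 0)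
          rw [abs_sub_comm] at hz0
          linarith
        have t1 : |q 1 - z 1| ≤ 4*Q.side := by
          have h := abs_sub_le (q 1) ((Q.anc (Q.k-1) hple.le).y0 + (Q.anc (Q.k-1) hple.le).side/2) (z 1)
          rw [abs_sub_comm] at hz1
          linarith
        linarith
      have hdxy : dist x y ≤ 12*Q.side := by
        obtain ⟨hx0, hx1⟩ := hdil x hx.1
        obtain ⟨hy0, hy1⟩ := hdil y hy.1
        have h1 := dist_le_coords x y
        have t0 : |x 0 - y 0| ≤ 6*Q.side := by
          have h := abs_sub_le (x 0) ((Q.anc (Q.k-1) hple.le).x0 + (Q.anc (Q.k-1) hple.le).side/2) (y 0)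
          rw [abs_sub_comm] at hy0
          linarith
        have t1 : |x 1 - y 1| ≤ 6*Q.side := by
          have h := abs_sub_le (x 1) ((Q.anc (Q.k-1) hple.le).y0 + (Q.anc (Q.k-1) hple.le).side/2) (y 1)
          rw [abs_sub_comm] at hy1
          linarith
        linarith
      have hmix : ∀ z : Pt, z ∈ (Q.anc (Q.k-1) hple.le).dil 3 → z ∈ E1set (Delta V W) →
          setDist Q.set (E1set (Delta V W)) ≤ 8*Q.side := fun z hz hz1 =>
        (setDist_le (corner_mem Q) hz1).trans (hdqz _ (corner_mem Q) _ hz)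
      rcases hx.2 with hx1 | hx2 <;> rcases hy.2 with hy1 | hy2
      · have hΔd : Delta V W ≤ dist x y := E_sep hN tr hε hεN rd
          (Set.mem_union_left _ hx1) (Set.mem_union_left _ hy1) hxy
        linarith [hmix x hx.1 hx1]
      · have hΔd : Delta V W ≤ dist x y := E_sep hN tr hε hεN rd
          (Set.mem_union_left _ hx1) (Set.mem_union_right _ hy2) hxy
        linarith [hmix x hx.1 hx1]
      · have hΔd : Delta V W ≤ dist x y := E_sep hN tr hε hεN rd
          (Set.mem_union_right _ hx2) (Set.mem_union_left _ hy1) hxy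
        linarith [hmix y hy.1 hy1]
      · obtain ⟨u, hu, hxpt, h8u, h8Δ⟩ := E2_pair_sep hN tr hε hεN rd hx2 hy2 hxy
        have hWu12 : 8 * W u ≤ 12*Q.side := h8u.trans hdxy
        have hΔ12 : 8 * Delta V W ≤ 12*Q.side := h8Δ.trans hdxy
        have hψ0 : 0 ≤ Psi N W u := psi_nonneg hN tr rd hu.1
        have hψ1 : Psi N W u ≤ 3/2 := psi_le hN tr hε hεN rd hu.1
        obtain ⟨p, hpE1, hp1, hp0⟩ := E1_near hΔ0 hΔ32 hψ0 hψ1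
        have hWu0 : 0 < W u := rd.2.1 u hu.1
        have hxp : dist x p ≤ Delta V W + W u := by
          have h1 := dist_le_coords x p
          have e0 : x 0 = Psi N W u := by rw [hxpt, pt0]
          have e1 : x 1 = W u := by rw [hxpt, pt1]
          rw [e0, e1] at h1
          have a0 : |Psi N W u - p 0| ≤ Delta V W := by rw [abs_sub_comm]; exact hp0
          have a1 : |W u - p 1| = W u := by rw [hp1, sub_zero, abs_of_pos hWu0]
          linarith
        have hqx : dist (pt Q.x0 Q.y0) x ≤ 8*Q.side := hdqz _ (corner_mem Q) _ hx.1
        have hdp : setDist Q.set (E1set (Delta V W)) ≤ dist (pt Q.x0 Q.y0) p :=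
          setDist_le (corner_mem Q) hpE1
        have htri := dist_triangle (pt Q.x0 Q.y0) x p
        linarith
  -- ## Conclusion
  refine ⟨⟨?_, ?_⟩, ?_, ?_⟩
  · rw [show ((50:ℝ))⁻¹ = 1/50 by norm_num]
    linarith
  · linarith
  · rintro ⟨x, hxeq⟩
    have hxm : x ∈ Q.dil 1.1 ∩ E1set (Delta V W) := by rw [hxeq]; rfl
    obtain ⟨hxd, hxE⟩ := hxm
    rw [mem_dil_iff] at hxd
    constructor
    · by_contra hcon
      push_neg at hcon
      obtain ⟨x', hx'E, hx'1, hx'd, hx'ne⟩ := E1_neighbor hΔ0 hΔ32 hxE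
      have hx3 : x ∈ Q.dil 3 := by
        rw [mem_dil_iff]
        constructor <;> [skip; skip] <;> [linarith [hxd.1]; linarith [hxd.2]]
      have hx'3 : x' ∈ Q.dil 3 := by
        rw [mem_dil_iff]
        have ht0 : |x' 0 - (Q.x0 + Q.side/2)| ≤ |x' 0 - x 0| + |x 0 - (Q.x0 + Q.side/2)| :=
          abs_sub_le _ _ _
        have ht1 : |x' 1 - (Q.y0 + Q.side/2)| ≤ |x' 1 - x 1| + |x 1 - (Q.y0 + Q.side/2)| :=
          abs_sub_le _ _ _
        have hx'x1 : |x' 1 - x 1| = 0 := by rw [hx'1, hxE.2.2]; simp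
        rw [hx'd] at ht0
        constructor
        · have : Delta V W < Q.side/50 := by linarith
          linarith [hxd.1]
        · linarith [hxd.2]
      exact hx'ne (hsub ⟨hx'3, Set.mem_union_left _ hx'E⟩ ⟨hx3, Set.mem_union_left _ hxE⟩)
    · obtain ⟨q, hq, hqd⟩ := close_point Q (r := 1.1 * Q.side / 2)
        (by linarith) hxd.1 hxd.2
      have := setDist_le hq hxE
      linarith
  · intro hempty
    have hkey : 0.05 * Q.side ≤ setDist Q.set (E1set (Delta V W)) := by
      apply le_setDist hQne E1_nonempty
      intro q hq p hp
      have hpd : p ∉ Q.dil 1.1 := by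
        intro hpd
        have : p ∈ (∅ : Set Pt) := hempty ▸ Set.mem_inter hpd hp
        exact absurd this (Set.notMem_empty p)
      rw [mem_dil_iff, not_and_or] at hpd
      obtain ⟨hq0, hq1⟩ := mem_set_coords hq
      rcases hpd with h | h
      · push_neg at h
        have hc0 : |q 0 - p 0| ≤ dist q p := coord0_le_dist q p
        have ht : |p 0 - (Q.x0 + Q.side/2)| ≤ |p 0 - q 0| + |q 0 - (Q.x0 + Q.side/2)| :=
          abs_sub_le _ _ _
        rw [abs_sub_comm] at hc0
        linarith
      · push_neg at h
        have hc1 : |q 1 - p 1| ≤ dist q p := coord1_le_dist q p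
        have ht : |p 1 - (Q.y0 + Q.side/2)| ≤ |p 1 - q 1| + |q 1 - (Q.y0 + Q.side/2)| :=
          abs_sub_le _ _ _
        rw [abs_sub_comm] at hc1
        linarith
    constructor
    · rw [show ((50:ℝ))⁻¹ = 1/50 by norm_num]
      linarith
    · linarith

/-- Lemma 5 of the paper: `δ_Q ≈ Δ + dist(Q, E₁)` for Whitney
squares, with refinements for squares of Type I and of Types II/III. -/
theorem statement8 :
    ∃ k₀ K : ℝ, 0 < k₀ ∧ 1 ≤ K ∧
      ∀ (N : ℕ) (V : Finset (List ℕ)) (W : List ℕ → ℝ) (ε : ℝ),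
        TreeHyp k₀ N V W ε → DepthAtLeastOne V →
          ∀ Q : DSquare, InWhitney (Eset N V W) Q →
            (K⁻¹ * (Delta V W + setDist Q.set (E1set (Delta V W))) ≤ Q.side ∧
              Q.side ≤ K * (Delta V W + setDist Q.set (E1set (Delta V W)))) ∧
            ((∃ x : Pt, Q.dil 1.1 ∩ E1set (Delta V W) = {x}) →
              Q.side ≤ K * Delta V W ∧ setDist Q.set (E1set (Delta V W)) ≤ Q.side) ∧
            (Q.dil 1.1 ∩ E1set (Delta V W) = ∅ →
              K⁻¹ * setDist Q.set (E1set (Delta V W)) ≤ Q.side ∧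
                Q.side ≤ K * setDist Q.set (E1set (Delta V W))) := statement8'
end
end

section
/- There exist absolute constants k₀ > 0 and K > 1 such that the following holds. Fix N ≥ 2, an N-ary tree V of depth L ≥ 1, and radially decaying weights with parameter ε ≤ k₀/N. Then for every non-leaf cluster C ∈ 𝒞 \ ∂𝒞, K^{−1}·N^{−1}·W_C ≤ diam(C) ≤ K·W_C; moreover W_C = x_C⁽²⁾ for every leaf cluster C = {x_C} ∈ ∂𝒞. -/
open MeasureTheory Set Metric
open scoped Classical

namespace Statement11Aux

lemma geom_le_two {e : ℝ} (h0 : 0 ≤ e) (h2 : e ≤ 1/2) (n : ℕ) :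
    ∑ j ∈ Finset.range n, e ^ j ≤ 2 := by
  induction n with
  | zero => norm_num
  | succ n ih =>
    have hS : 0 ≤ ∑ j ∈ Finset.range n, e ^ j :=
      Finset.sum_nonneg fun j _ => pow_nonneg h0 j
    rw [geom_sum_succ]
    nlinarith

lemma dropLast_take' {l : List ℕ} {n : ℕ} (h : n+1 ≤ l.length) :
    (l.take (n+1)).dropLast = l.take n := by
  rcases Nat.lt_or_ge (n+1) l.length with h1 | h1
  · rw [List.dropLast_take h1]; simp
  · have h2 : n + 1 = l.length := le_antisymm h h1
    rw [h2, List.take_length, List.dropLast_eq_take, ← h2]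
    simp

lemma getD_of_concat_prefix {v u : List ℕ} {c : ℕ} (h : v ++ [c] <+: u) :
    u.getD v.length 0 = c := by
  obtain ⟨t, rfl⟩ := h
  rw [List.getD_eq_getElem _ _ (by simp)]
  rw [List.getElem_append_left (by simp)]
  simp

variable {N : ℕ} {V : Finset (List ℕ)} {W : List ℕ → ℝ} {ε : ℝ}

lemma take_mem (hT : IsNaryTree N V) {u : List ℕ} (hu : u ∈ V) (i : ℕ) :
    u.take i ∈ V := hT.2.1 u hu _ (List.take_prefix i u)

lemma take_pref {v u : List ℕ} (hpre : v <+: u) : u.take v.length = v := by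
  obtain ⟨t, rfl⟩ := hpre; simp

lemma W_take_le (hT : IsNaryTree N V) (hRD : RadiallyDecaying V W ε) (h0 : 0 ≤ ε)
    {u : List ℕ} (hu : u ∈ V) {d i : ℕ} (hdi : d ≤ i) (hil : i ≤ u.length) :
    W (u.take i) ≤ ε ^ (i - d) * W (u.take d) := by
  induction i, hdi using Nat.le_induction with
  | base => simp
  | succ i hdi ih =>
    have hil' : i ≤ u.length := le_trans (Nat.le_succ i) hil
    have h1 : W (u.take (i+1)) ≤ ε * W (u.take i) := by
      have hmem := take_mem hT hu (i+1)
      have hne : u.take (i+1) ≠ [] := by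
        intro h
        have h5 : (u.take (i+1)).length = i+1 := by rw [List.length_take]; omega
        rw [h] at h5; simp at h5
      have h3 := hRD.2.2 _ hmem hne
      rwa [dropLast_take' hil] at h3
    have h4 : 0 < W (u.take d) := hRD.2.1 _ (take_mem hT hu d)
    calc W (u.take (i+1)) ≤ ε * W (u.take i) := h1
      _ ≤ ε * (ε ^ (i-d) * W (u.take d)) := mul_le_mul_of_nonneg_left (ih hil') h0
      _ = ε ^ (i+1-d) * W (u.take d) := by
          rw [show i+1-d = (i-d)+1 from by omega, pow_succ]; ring

lemma Psi_prefix {v u : List ℕ} (hpre : v <+: u) :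
    Psi N W u = Psi N W v + ∑ i ∈ Finset.Ico v.length u.length,
      W (u.take i) * (u.getD i 0 : ℝ) / ((N:ℝ) - 1) := by
  unfold Psi
  rw [Finset.range_eq_Ico,
    ← Finset.sum_Ico_consecutive _ (Nat.zero_le v.length) hpre.length_le,
    ← Finset.range_eq_Ico]
  congr 1
  apply Finset.sum_congr rfl
  intro i hi
  simp only [Finset.mem_range] at hi
  obtain ⟨t, rfl⟩ := hpre
  have hg : (v ++ t).getD i 0 = v.getD i 0 := by
    rw [List.getD_eq_getElem _ _ (by simp; omega), List.getD_eq_getElem _ _ hi,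
      List.getElem_append_left hi]
  rw [List.take_append_of_le_length hi.le, hg]

lemma tail_bound (hN : 2 ≤ N) (hT : IsNaryTree N V) (hRD : RadiallyDecaying V W ε)
    (h0 : 0 ≤ ε) (h2 : ε ≤ 1/2) {v u : List ℕ} (hu : u ∈ V) (hpre : v <+: u)
    {m : ℕ} (hm : v.length ≤ m) :
    |∑ i ∈ Finset.Ico m u.length, W (u.take i) * (u.getD i 0 : ℝ) / ((N:ℝ) - 1)|
      ≤ 2 * ε ^ (m - v.length) * W v := by
  have hN1 : (1:ℝ) ≤ (N:ℝ) - 1 := by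
    have : (2:ℝ) ≤ (N:ℝ) := by exact_mod_cast hN
    linarith
  have hvV : v ∈ V := hT.2.1 u hu v hpre
  have hWv : 0 < W v := hRD.2.1 v hvV
  have htk : u.take v.length = v := take_pref hpre
  calc |∑ i ∈ Finset.Ico m u.length, W (u.take i) * (u.getD i 0 : ℝ) / ((N:ℝ) - 1)|
      ≤ ∑ i ∈ Finset.Ico m u.length, |W (u.take i) * (u.getD i 0 : ℝ) / ((N:ℝ) - 1)| :=
        Finset.abs_sum_le_sum_abs _ _
    _ ≤ ∑ i ∈ Finset.Ico m u.length, ε ^ (i - v.length) * W v := by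
        apply Finset.sum_le_sum
        intro i hi
        simp only [Finset.mem_Ico] at hi
        have hWi : 0 < W (u.take i) := hRD.2.1 _ (take_mem hT hu i)
        have hdig : (u.getD i 0 : ℝ) ≤ (N:ℝ) - 1 := by
          have hlt : u.getD i 0 < N := by
            rw [List.getD_eq_getElem _ _ hi.2]
            exact hT.2.2.1 u hu _ (List.getElem_mem _)
          have : (u.getD i 0 : ℝ) + 1 ≤ (N:ℝ) := by exact_mod_cast hlt
          linarith
        have hdig0 : (0:ℝ) ≤ (u.getD i 0 : ℝ) := Nat.cast_nonneg _
        rw [abs_of_nonneg (by positivity)]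
        have hstep : W (u.take i) * (u.getD i 0 : ℝ) / ((N:ℝ) - 1) ≤ W (u.take i) := by
          rw [div_le_iff₀ (by linarith)]
          nlinarith
        have hWle : W (u.take i) ≤ ε ^ (i - v.length) * W v := by
          have h6 := W_take_le hT hRD h0 hu (le_trans hm hi.1) hi.2.le
          rwa [htk] at h6
        exact le_trans hstep hWle
    _ ≤ 2 * ε ^ (m - v.length) * W v := by
        rw [Finset.sum_Ico_eq_sum_range]
        have hc : ∀ i ∈ Finset.range (u.length - m),
            ε ^ (m + i - v.length) * W v = ε ^ (m - v.length) * W v * ε ^ i := by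
          intro i _
          rw [show m + i - v.length = (m - v.length) + i from by omega, pow_add]; ring
        rw [Finset.sum_congr rfl hc, ← Finset.mul_sum]
        have hg := geom_le_two h0 h2 (u.length - m)
        have hx : 0 ≤ ε ^ (m - v.length) * W v := by positivity
        nlinarith

lemma exists_leaf_ext_aux (hT : IsNaryTree N V) :
    ∀ k : ℕ, ∀ v ∈ V, V.sup List.length ≤ v.length + k →
      ∃ u, IsLeaf V u ∧ v <+: u := by
  intro k
  induction k with
  | zero =>
    intro v hv hlen
    refine ⟨v, ⟨hv, ?_⟩, List.prefix_refl v⟩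
    intro a ha
    have h1 := Finset.le_sup (f := List.length) ha
    simp only [List.length_append, List.length_cons, List.length_nil] at h1
    omega
  | succ k ih =>
    intro v hv hlen
    by_cases hleaf : ∀ a : ℕ, v ++ [a] ∉ V
    · exact ⟨v, ⟨hv, hleaf⟩, List.prefix_refl v⟩
    · push_neg at hleaf
      obtain ⟨a, ha⟩ := hleaf
      obtain ⟨u, hu, hpre⟩ := ih (v ++ [a]) ha (by simp only [List.length_append, List.length_cons, List.length_nil]; omega)
      exact ⟨u, hu, (List.prefix_append v [a]).trans hpre⟩

lemma exists_leaf_ext (hT : IsNaryTree N V) {v : List ℕ} (hv : v ∈ V) :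
    ∃ u, IsLeaf V u ∧ v <+: u :=
  exists_leaf_ext_aux hT (V.sup List.length) v hv (by omega)

lemma leaf_prefix_eq (hT : IsNaryTree N V) {v u : List ℕ} (hv : IsLeaf V v)
    (hu : IsLeaf V u) (hpre : v <+: u) : u = v := by
  obtain ⟨t, rfl⟩ := hpre
  cases t with
  | nil => simp
  | cons c t' =>
    exfalso
    apply hv.2 c
    apply hT.2.1 _ hu.1
    exact ⟨t', by simp⟩

lemma dist_pt (a b c d : ℝ) :
    dist (pt a c) (pt b d) = Real.sqrt ((a-b)^2 + (c-d)^2) := by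
  rw [EuclideanSpace.dist_eq, Fin.sum_univ_two]
  simp [pt, Real.dist_eq, sq_abs]

lemma abs_fst_le_dist (a b c d : ℝ) : |a - b| ≤ dist (pt a c) (pt b d) := by
  rw [dist_pt, ← Real.sqrt_sq_eq_abs]
  apply Real.sqrt_le_sqrt
  nlinarith [sq_nonneg (c-d)]

lemma dist_le_abs_add (a b c d : ℝ) :
    dist (pt a c) (pt b d) ≤ |a - b| + |c - d| := by
  rw [dist_pt]
  have h : (a-b)^2 + (c-d)^2 ≤ (|a-b| + |c-d|)^2 := by
    nlinarith [sq_abs (a-b), sq_abs (c-d),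
      mul_nonneg (abs_nonneg (a-b)) (abs_nonneg (c-d))]
  calc Real.sqrt ((a-b)^2 + (c-d)^2) ≤ Real.sqrt ((|a-b| + |c-d|)^2) :=
        Real.sqrt_le_sqrt h
    _ = |a-b| + |c-d| := Real.sqrt_sq (by positivity)

lemma cluster_bounded (v : List ℕ) : Bornology.IsBounded (Cluster N V W v) := by
  have hfin : (Cluster N V W v).Finite := by
    apply Set.Finite.subset (Set.Finite.image (fun u => pt (Psi N W u) (W u)) V.finite_toSet)
    rintro x ⟨u, hu, _, rfl⟩
    exact ⟨u, hu.1, rfl⟩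
  exact hfin.isBounded

end Statement11Aux

/-- diameter of a non-leaf cluster is comparable to its weight, and
the weight of a leaf cluster is the height of its point. -/

theorem statement11 :
    ∃ k₀ K : ℝ, 0 < k₀ ∧ 1 < K ∧
      ∀ (N : ℕ) (V : Finset (List ℕ)) (W : List ℕ → ℝ) (ε : ℝ),
        TreeHyp k₀ N V W ε → DepthAtLeastOne V →
          (∀ v ∈ V, (∃ a : ℕ, v ++ [a] ∈ V) →
            K⁻¹ * (N : ℝ)⁻¹ * W v ≤ Metric.diam (Cluster N V W v) ∧
              Metric.diam (Cluster N V W v) ≤ K * W v) ∧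
          (∀ v : List ℕ, IsLeaf V v → ∀ x ∈ Cluster N V W v, x 1 = W v) := by
  classical
  refine ⟨1/8, 6, by norm_num, by norm_num, ?_⟩
  intro N V W ε hTH _hdepth
  obtain ⟨hN, hT, hε0, hεk, hRD⟩ := hTH
  have hNR : (2:ℝ) ≤ (N:ℝ) := by exact_mod_cast hN
  have hN0 : (0:ℝ) < (N:ℝ) := by linarith
  have hN1 : (1:ℝ) ≤ (N:ℝ) - 1 := by linarith
  have hεN : ε ≤ 1 / (8 * (N:ℝ)) := by
    rw [show (1:ℝ) / (8 * (N:ℝ)) = (1/8) / (N:ℝ) from by ring]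
    exact hεk
  have hε2 : ε ≤ 1/2 := by
    have h9 : 1/(8*(N:ℝ)) ≤ 1/2 := by
      rw [div_le_div_iff₀ (by linarith) (by norm_num)]
      linarith
    linarith
  constructor
  · rintro v hv ⟨a0, ha0⟩
    have hWv : 0 < W v := hRD.2.1 v hv
    have key : ∀ u : List ℕ, IsLeaf V u → v <+: u →
        |Psi N W u - Psi N W v| ≤ 2 * W v ∧ 0 < W u ∧ W u ≤ W v := by
      intro u hu hpre
      have hb := Statement11Aux.tail_bound hN hT hRD hε0.le hε2 hu.1 hpre
        (le_refl v.length)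
      rw [Nat.sub_self, pow_zero, mul_one] at hb
      have hP := Statement11Aux.Psi_prefix (N := N) (W := W) hpre
      refine ⟨?_, hRD.2.1 u hu.1, ?_⟩
      · rw [hP]; simpa using hb
      · have htk : u.take v.length = v := Statement11Aux.take_pref hpre
        have h7 := Statement11Aux.W_take_le hT hRD hε0.le hu.1 hpre.length_le
          (le_refl u.length)
        rw [List.take_length, htk] at h7
        have hpow : ε ^ (u.length - v.length) ≤ 1 := pow_le_one₀ hε0.le (by linarith)
        nlinarith
    constructor
    · -- lower bound
      obtain ⟨a, ha, b, hb, hab⟩ := Finset.one_lt_card.mp (hT.2.2.2 v hv ⟨a0, ha0⟩)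
      simp only [Finset.mem_filter, Finset.mem_range] at ha hb
      obtain ⟨ua, hua, hpa⟩ := Statement11Aux.exists_leaf_ext hT ha.2
      obtain ⟨ub, hub, hpb⟩ := Statement11Aux.exists_leaf_ext hT hb.2
      have hpva : v <+: ua := (List.prefix_append v [a]).trans hpa
      have hpvb : v <+: ub := (List.prefix_append v [b]).trans hpb
      have hdec : ∀ c : ℕ, ∀ u : List ℕ, IsLeaf V u → (v ++ [c]) <+: u →
          ∃ R : ℝ, Psi N W u = Psi N W v + W v * (c:ℝ)/((N:ℝ)-1) + R ∧
            |R| ≤ 2*ε*W v := by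
        intro c u hu hpc
        have hpv : v <+: u := (List.prefix_append v [c]).trans hpc
        have hlen : v.length + 1 ≤ u.length := by simpa using hpc.length_le
        have hP := Statement11Aux.Psi_prefix (N := N) (W := W) hpv
        rw [Finset.sum_eq_sum_Ico_succ_bot (by omega : v.length < u.length)] at hP
        have htk : u.take v.length = v := Statement11Aux.take_pref hpv
        have hgd : u.getD v.length 0 = c := Statement11Aux.getD_of_concat_prefix hpc
        refine ⟨∑ i ∈ Finset.Ico (v.length+1) u.length,
          W (u.take i) * (u.getD i 0 : ℝ)/((N:ℝ)-1), ?_, ?_⟩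
        · rw [hP, htk, hgd]; ring
        · have h8 := Statement11Aux.tail_bound hN hT hRD hε0.le hε2 hu.1 hpv
            (Nat.le_succ v.length)
          rwa [show v.length + 1 - v.length = 1 from by omega, pow_one] at h8
      obtain ⟨Ra, hRa1, hRa2⟩ := hdec a ua hua hpa
      obtain ⟨Rb, hRb1, hRb2⟩ := hdec b ub hub hpb
      have hab1 : (1:ℝ) ≤ |(a:ℝ) - (b:ℝ)| := by
        rcases lt_or_gt_of_ne hab with hlt | hlt
        · have h6 : a + 1 ≤ b := hlt
          have h7 : (a:ℝ) + 1 ≤ (b:ℝ) := by exact_mod_cast h6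
          rw [abs_sub_comm, abs_of_nonneg (by linarith)]
          linarith
        · have h6 : b + 1 ≤ a := hlt
          have h7 : (b:ℝ) + 1 ≤ (a:ℝ) := by exact_mod_cast h6
          rw [abs_of_nonneg (by linarith)]
          linarith
      have hdiff : Psi N W ua - Psi N W ub =
          W v * ((a:ℝ) - b)/((N:ℝ)-1) + (Ra - Rb) := by
        rw [hRa1, hRb1]; ring
      have hmain : W v / ((N:ℝ)-1) ≤ |W v * ((a:ℝ)-b)/((N:ℝ)-1)| := by
        rw [abs_div, abs_mul, abs_of_nonneg hWv.le,
          abs_of_nonneg (by linarith : (0:ℝ) ≤ (N:ℝ)-1)]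
        gcongr
        exact le_mul_of_one_le_right hWv.le hab1
      have htri : |W v * ((a:ℝ)-b)/((N:ℝ)-1)| - |Ra - Rb| ≤ |Psi N W ua - Psi N W ub| := by
        rw [hdiff]
        have h3 := abs_sub_abs_le_abs_sub (W v * ((a:ℝ)-b)/((N:ℝ)-1)) (-(Ra - Rb))
        rw [abs_neg, sub_neg_eq_add] at h3
        linarith
      have hRab : |Ra - Rb| ≤ 4*ε*W v := by
        have := abs_sub (Ra) (Rb)
        calc |Ra - Rb| ≤ |Ra| + |Rb| := abs_sub Ra Rb
          _ ≤ 4*ε*W v := by linarith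
      have hxa : pt (Psi N W ua) (W ua) ∈ Cluster N V W v := ⟨ua, hua, hpva, rfl⟩
      have hxb : pt (Psi N W ub) (W ub) ∈ Cluster N V W v := ⟨ub, hub, hpvb, rfl⟩
      have hdd := Metric.dist_le_diam_of_mem (Statement11Aux.cluster_bounded v) hxa hxb
      have hfst := Statement11Aux.abs_fst_le_dist (Psi N W ua) (Psi N W ub) (W ua) (W ub)
      have hnum : (6:ℝ)⁻¹ * ((N:ℝ))⁻¹ * W v ≤ W v / ((N:ℝ)-1) - 4*ε*W v := by
        have e1 : W v / (N:ℝ) ≤ W v/((N:ℝ)-1) :=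
          div_le_div_of_nonneg_left hWv.le (by linarith) (by linarith)
        have e2 : 4*ε*W v ≤ 4 * (1/(8*(N:ℝ))) * W v := by nlinarith
        have e3 : 4 * (1/(8*(N:ℝ))) * W v = (1/2) * ((N:ℝ))⁻¹ * W v := by
          field_simp
          ring
        have e4 : W v / (N:ℝ) = ((N:ℝ))⁻¹ * W v := by ring
        have e5 : 0 ≤ ((N:ℝ))⁻¹ * W v := by positivity
        rw [e3] at e2
        rw [e4] at e1
        linarith
      calc (6:ℝ)⁻¹ * ((N:ℝ))⁻¹ * W v ≤ W v / ((N:ℝ)-1) - 4*ε*W v := hnum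
        _ ≤ |Psi N W ua - Psi N W ub| := by linarith
        _ ≤ dist (pt (Psi N W ua) (W ua)) (pt (Psi N W ub) (W ub)) := hfst
        _ ≤ Metric.diam (Cluster N V W v) := hdd
    · -- upper bound
      apply Metric.diam_le_of_forall_dist_le (by positivity : (0:ℝ) ≤ 6 * W v)
      rintro x ⟨u1, hu1, hp1, rfl⟩ y ⟨u2, hu2, hp2, rfl⟩
      obtain ⟨e1, f1, g1⟩ := key u1 hu1 hp1
      obtain ⟨e2, f2, g2⟩ := key u2 hu2 hp2
      have h1 : |Psi N W u1 - Psi N W u2| ≤ 4 * W v := by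
        calc |Psi N W u1 - Psi N W u2|
            ≤ |Psi N W u1 - Psi N W v| + |Psi N W v - Psi N W u2| :=
              abs_sub_le _ _ _
          _ ≤ 4 * W v := by
              rw [abs_sub_comm (Psi N W v) (Psi N W u2)]
              linarith
      have h2 : |W u1 - W u2| ≤ W v := abs_le.mpr ⟨by linarith, by linarith⟩
      calc dist (pt (Psi N W u1) (W u1)) (pt (Psi N W u2) (W u2))
          ≤ |Psi N W u1 - Psi N W u2| + |W u1 - W u2| :=
            Statement11Aux.dist_le_abs_add _ _ _ _
        _ ≤ 6 * W v := by linarith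
  · rintro v hvleaf x ⟨u, hu, hpre, rfl⟩
    rw [Statement11Aux.leaf_prefix_eq hT hvleaf hu hpre]
    simp [pt]
end

section
/- There exist absolute constants k₀ > 0 and k > 0 such that the following holds. Fix N ≥ 2, an N-ary tree V of depth L ≥ 1, and radially decaying weights with parameter ε ≤ k₀/N. Then for any two disjoint clusters C, C' ∈ 𝒞₀, dist(C, C') ≥ k·N^{−1}·(W_{π(C)} + W_{π(C')}). -/
open MeasureTheory Set Metric
open scoped Classical

section aux
variable {N : ℕ} {V : Finset (List ℕ)} {W : List ℕ → ℝ} {ε : ℝ}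

lemma aux_prefix_dropLast {u v : List ℕ} (h : u <+: v) (hne : u ≠ v) : u <+: v.dropLast := by
  obtain ⟨t, rfl⟩ := h
  rcases t.eq_nil_or_concat with rfl | ⟨t', x, rfl⟩
  · simp at hne
  · rw [List.concat_eq_append, ← List.append_assoc, List.dropLast_concat]
    exact ⟨t', rfl⟩

lemma aux_pref_drop {w v : List ℕ} (a : ℕ) (h : w ++ [a] <+: v) : w <+: v.dropLast := by
  obtain ⟨r, rfl⟩ := h
  rcases r.eq_nil_or_concat with rfl | ⟨r', x, rfl⟩
  · rw [List.append_nil, List.dropLast_concat]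
  · rw [List.concat_eq_append, ← List.append_assoc, List.dropLast_concat]
    exact ⟨[a] ++ r', by simp⟩

lemma aux_decay (hV : IsNaryTree N V) (hW : RadiallyDecaying V W ε)
    (hε0 : 0 ≤ ε) (hε1 : ε ≤ 1) :
    ∀ v, v ∈ V → ∀ u, u <+: v → W v ≤ ε ^ (v.length - u.length) * W u := by
  intro v
  induction v using List.reverseRecOn with
  | nil =>
    intro _ u hu
    rw [List.prefix_nil] at hu; subst hu; simp
  | append_singleton l x ih =>
    intro hv u hu
    by_cases heq : u = l ++ [x]
    · subst heq; simp
    · have hu' : u <+: l := by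
        have := aux_prefix_dropLast hu heq
        rwa [List.dropLast_concat] at this
      have hl : l ∈ V := hV.2.1 _ hv _ ⟨[x], rfl⟩
      have h1 : W (l ++ [x]) ≤ ε * W l := by
        have := hW.2.2 _ hv (by simp)
        rwa [List.dropLast_concat] at this
      have h2 := ih hl _ hu'
      have hlen : u.length ≤ l.length := hu'.length_le
      have hex : (l ++ [x]).length - u.length = (l.length - u.length) + 1 := by
        simp only [List.length_append, List.length_singleton]; omega
      rw [hex, pow_succ]
      calc W (l ++ [x]) ≤ ε * W l := h1
        _ ≤ ε * (ε ^ (l.length - u.length) * W u) := mul_le_mul_of_nonneg_left h2 hε0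
        _ = ε ^ (l.length - u.length) * ε * W u := by ring

lemma aux_mono (hV : IsNaryTree N V) (hW : RadiallyDecaying V W ε)
    (hε0 : 0 ≤ ε) (hε1 : ε ≤ 1) {v u : List ℕ} (hv : v ∈ V) (hu : u <+: v) : W v ≤ W u := by
  have h := aux_decay hV hW hε0 hε1 v hv u hu
  have hWu : 0 < W u := hW.2.1 _ (hV.2.1 _ hv _ hu)
  have : ε ^ (v.length - u.length) ≤ 1 := pow_le_one₀ hε0 hε1
  nlinarith

lemma aux_exists_leaf (hV : IsNaryTree N V) {v : List ℕ} (hv : v ∈ V) :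
    ∃ u, IsLeaf V u ∧ v <+: u := by
  obtain ⟨u, hu, hmax⟩ := Finset.exists_max_image (V.filter (fun u => v <+: u))
    (fun u => u.length) ⟨v, by simp [hv]⟩
  rw [Finset.mem_filter] at hu
  refine ⟨u, ⟨hu.1, fun a ha => ?_⟩, hu.2⟩
  have := hmax (u ++ [a]) (Finset.mem_filter.mpr ⟨ha, hu.2.trans ⟨[a], rfl⟩⟩)
  simp at this

lemma aux_branch : ∀ (v v' : List ℕ), ¬ v <+: v' → ¬ v' <+: v →
    ∃ w a b, a ≠ b ∧ w ++ [a] <+: v ∧ w ++ [b] <+: v' := by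
  intro v
  induction v with
  | nil => intro v' h _; exact absurd (List.nil_prefix) h
  | cons x xs ih =>
    intro v' h h'
    match v' with
    | [] => exact absurd (List.nil_prefix) h'
    | y :: ys =>
      by_cases hxy : x = y
      · subst hxy
        obtain ⟨w, a, b, hab, h1, h2⟩ := ih ys
          (fun hp => h (List.cons_prefix_cons.mpr ⟨rfl, hp⟩))
          (fun hp => h' (List.cons_prefix_cons.mpr ⟨rfl, hp⟩))
        exact ⟨x :: w, a, b, hab, List.cons_prefix_cons.mpr ⟨rfl, h1⟩,
          List.cons_prefix_cons.mpr ⟨rfl, h2⟩⟩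
      · exact ⟨[], x, y, hxy, ⟨xs, by simp⟩, ⟨ys, by simp⟩⟩

lemma aux_geom (hε0 : 0 ≤ ε) (hε1 : ε < 1) (r : ℕ) :
    ∑ j ∈ Finset.range r, ε ^ (j+1) ≤ ε / (1 - ε) := by
  have h2 : (0:ℝ) < 1 - ε := by linarith
  have h1 : ∑ j ∈ Finset.range r, ε ^ (j+1) = ε * ∑ j ∈ Finset.range r, ε ^ j := by
    rw [Finset.mul_sum]; exact Finset.sum_congr rfl fun j _ => by ring
  have hpow : 0 ≤ ε ^ r := pow_nonneg hε0 r
  rw [h1, geom_sum_eq hε1.ne r]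
  have heq : (ε ^ r - 1) / (ε - 1) = (1 - ε ^ r) / (1 - ε) := by
    rw [div_eq_div_iff (by linarith) (by linarith)]; ring
  rw [heq]
  calc ε * ((1 - ε ^ r) / (1 - ε)) ≤ ε * (1 / (1 - ε)) := by gcongr; linarith
    _ = ε / (1 - ε) := by ring

lemma aux_psi (N : ℕ) (W : List ℕ → ℝ) (w : List ℕ) (a : ℕ) (t : List ℕ) :
    Psi N W (w ++ a :: t) = Psi N W w + W w * (a : ℝ) / ((N:ℝ)-1) +
      ∑ j ∈ Finset.range t.length,
        W ((w ++ a :: t).take (w.length + (j+1))) * (t.getD j 0 : ℝ) / ((N:ℝ)-1) := by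
  unfold Psi
  rw [List.length_append, Finset.sum_range_add]
  have h1 : ∑ i ∈ Finset.range w.length,
      W ((w ++ a :: t).take i) * ((w ++ a :: t).getD i 0 : ℝ) / ((N:ℝ)-1)
      = ∑ i ∈ Finset.range w.length, W (w.take i) * (w.getD i 0 : ℝ) / ((N:ℝ)-1) := by
    refine Finset.sum_congr rfl fun i hi => ?_
    rw [Finset.mem_range] at hi
    rw [List.take_append_of_le_length hi.le, List.getD_append _ _ _ _ hi]
  have h2 : ∑ i ∈ Finset.range (a :: t).length,
      W ((w ++ a :: t).take (w.length + i)) * ((w ++ a :: t).getD (w.length + i) 0 : ℝ) / ((N:ℝ)-1)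
      = W w * (a : ℝ) / ((N:ℝ)-1) +
        ∑ j ∈ Finset.range t.length,
          W ((w ++ a :: t).take (w.length + (j+1))) * (t.getD j 0 : ℝ) / ((N:ℝ)-1) := by
    have h0 : W ((w ++ a :: t).take (w.length + 0)) *
        ((w ++ a :: t).getD (w.length + 0) 0 : ℝ) / ((N:ℝ)-1) = W w * (a:ℝ) / ((N:ℝ)-1) := by
      rw [Nat.add_zero, List.take_left, List.getD_append_right _ _ _ _ le_rfl, Nat.sub_self]
      rfl
    rw [List.length_cons, Finset.sum_range_succ', h0, add_comm]
    congr 1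
    refine Finset.sum_congr rfl fun j hj => ?_
    congr 2
    rw [List.getD_append_right _ _ _ _ (by omega), Nat.add_sub_cancel_left]
    rfl
  rw [h1, h2]; ring

lemma aux_tail (hV : IsNaryTree N V) (hW : RadiallyDecaying V W ε)
    (hε0 : 0 < ε) (hε1 : ε < 1) (hN : 2 ≤ N)
    (w : List ℕ) (a : ℕ) (t : List ℕ) (hu : w ++ a :: t ∈ V) :
    0 ≤ (∑ j ∈ Finset.range t.length,
        W ((w ++ a :: t).take (w.length + (j+1))) * (t.getD j 0 : ℝ) / ((N:ℝ)-1)) ∧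
    (∑ j ∈ Finset.range t.length,
        W ((w ++ a :: t).take (w.length + (j+1))) * (t.getD j 0 : ℝ) / ((N:ℝ)-1))
      ≤ ε / (1-ε) * W w := by
  have hNr : (2:ℝ) ≤ (N:ℝ) := by exact_mod_cast hN
  have hN1 : (1:ℝ) ≤ (N:ℝ) - 1 := by linarith
  have hw : w ∈ V := hV.2.1 _ hu _ ⟨a::t, rfl⟩
  have hWw : 0 < W w := hW.2.1 _ hw
  have key : ∀ j ∈ Finset.range t.length,
      0 ≤ W ((w ++ a :: t).take (w.length + (j+1))) * (t.getD j 0 : ℝ) / ((N:ℝ)-1) ∧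
      W ((w ++ a :: t).take (w.length + (j+1))) * (t.getD j 0 : ℝ) / ((N:ℝ)-1)
        ≤ ε ^ (j+1) * W w := by
    intro j hj
    rw [Finset.mem_range] at hj
    have htake : (w ++ a :: t).take (w.length + (j+1)) = w ++ (a :: t).take (j+1) :=
      List.take_length_add_append _
    have hpV : w ++ (a :: t).take (j+1) ∈ V := by
      refine hV.2.1 _ hu _ ?_
      rw [← htake]; exact List.take_prefix _ _
    have hWp : 0 < W (w ++ (a::t).take (j+1)) := hW.2.1 _ hpV
    have hlen : (w ++ (a::t).take (j+1)).length = w.length + (j+1) := by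
      simp only [List.length_append, List.length_take, List.length_cons]
      omega
    have hdig : (t.getD j 0 : ℝ) ≤ (N:ℝ) - 1 := by
      have hmem : t.getD j 0 ∈ w ++ a :: t := by
        rw [List.getD_eq_getElem _ _ hj]
        exact List.mem_append_right _ (List.mem_cons_of_mem _ (List.getElem_mem _))
      have hlt := hV.2.2.1 _ hu _ hmem
      have h1 : (t.getD j 0 : ℝ) + 1 ≤ (N:ℝ) := by exact_mod_cast hlt
      linarith
    have hdig0 : (0:ℝ) ≤ (t.getD j 0 : ℝ) := Nat.cast_nonneg _
    have hdecay : W (w ++ (a::t).take (j+1)) ≤ ε ^ (j+1) * W w := by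
      have := aux_decay hV hW hε0.le hε1.le _ hpV w ⟨_, rfl⟩
      rwa [hlen, Nat.add_sub_cancel_left] at this
    rw [htake]
    constructor
    · exact div_nonneg (mul_nonneg hWp.le hdig0) (by linarith)
    · calc W (w ++ (a::t).take (j+1)) * (t.getD j 0 : ℝ) / ((N:ℝ)-1)
          ≤ W (w ++ (a::t).take (j+1)) * ((N:ℝ)-1) / ((N:ℝ)-1) := by gcongr
        _ = W (w ++ (a::t).take (j+1)) := by field_simp
        _ ≤ ε ^ (j+1) * W w := hdecay
  constructor
  · exact Finset.sum_nonneg fun j hj => (key j hj).1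
  · calc (∑ j ∈ Finset.range t.length,
        W ((w ++ a :: t).take (w.length + (j+1))) * (t.getD j 0 : ℝ) / ((N:ℝ)-1))
        ≤ ∑ j ∈ Finset.range t.length, ε ^ (j+1) * W w :=
          Finset.sum_le_sum fun j hj => (key j hj).2
      _ = (∑ j ∈ Finset.range t.length, ε ^ (j+1)) * W w := by rw [Finset.sum_mul]
      _ ≤ ε / (1-ε) * W w :=
          mul_le_mul_of_nonneg_right (aux_geom hε0.le hε1 _) hWw.le

lemma aux_dist (A B A' B' : ℝ) : |A - A'| ≤ dist (pt A B) (pt A' B') := by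
  have h : dist (pt A B) (pt A' B') = Real.sqrt (|A - A'|^2 + |B - B'|^2) := by
    rw [EuclideanSpace.dist_eq]; simp [Fin.sum_univ_two, pt, Real.dist_eq, sq_abs]
  rw [h]
  calc |A - A'| = Real.sqrt (|A - A'|^2) := by rw [Real.sqrt_sq_eq_abs, abs_abs]
    _ ≤ Real.sqrt (|A - A'|^2 + |B - B'|^2) :=
        Real.sqrt_le_sqrt (by nlinarith [sq_nonneg (B - B')])

end aux

set_option maxHeartbeats 1600000 in
/-- lower bound for the distance between disjoint clusters. -/
theorem statement12 :
    ∃ k₀ k : ℝ, 0 < k₀ ∧ 0 < k ∧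
      ∀ (N : ℕ) (V : Finset (List ℕ)) (W : List ℕ → ℝ) (ε : ℝ),
        TreeHyp k₀ N V W ε → DepthAtLeastOne V →
          ∀ v ∈ V, v ≠ [] → ∀ v' ∈ V, v' ≠ [] →
            Disjoint (Cluster N V W v) (Cluster N V W v') →
              k * (N : ℝ)⁻¹ * (W v.dropLast + W v'.dropLast) ≤
                setDist (Cluster N V W v) (Cluster N V W v') := by
  refine ⟨1/8, 1/3, by norm_num, by norm_num, ?_⟩
  intro N V W ε hT _ v hv hvne v' hv' hv'ne hdisj
  obtain ⟨hN, hV, hε0, hεk, hW⟩ := hT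
  have hNr : (2:ℝ) ≤ (N:ℝ) := by exact_mod_cast hN
  have hNpos : (0:ℝ) < (N:ℝ) := by linarith
  have hεN : ε ≤ 1/(8*(N:ℝ)) := by
    calc ε ≤ 1/8/(N:ℝ) := hεk
      _ = 1/(8*(N:ℝ)) := by rw [div_div]
  have hε16 : ε ≤ 1/16 :=
    hεN.trans (one_div_le_one_div_of_le (by norm_num) (by linarith))
  have hε1 : ε < 1 := by linarith
  have hninc : ¬ v <+: v' := by
    intro hp
    obtain ⟨u, hu, hvu⟩ := aux_exists_leaf hV hv'
    exact Set.disjoint_left.mp hdisj ⟨u, hu, hp.trans hvu, rfl⟩ ⟨u, hu, hvu, rfl⟩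
  have hninc' : ¬ v' <+: v := by
    intro hp
    obtain ⟨u, hu, hvu⟩ := aux_exists_leaf hV hv
    exact Set.disjoint_left.mp hdisj ⟨u, hu, hvu, rfl⟩ ⟨u, hu, hp.trans hvu, rfl⟩
  obtain ⟨w, a, b, hab, hwa, hwb⟩ := aux_branch v v' hninc hninc'
  have hwV : w ∈ V := hV.2.1 _ hv _ ((List.prefix_append w [a]).trans hwa)
  have hWw : 0 < W w := hW.2.1 _ hwV
  have hpar : W v.dropLast ≤ W w :=
    aux_mono hV hW hε0.le hε1.le (hV.2.1 _ hv _ (List.dropLast_prefix v)) (aux_pref_drop a hwa)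
  have hpar' : W v'.dropLast ≤ W w :=
    aux_mono hV hW hε0.le hε1.le (hV.2.1 _ hv' _ (List.dropLast_prefix v')) (aux_pref_drop b hwb)
  have hE : ε/(1-ε) ≤ 2/(15*(N:ℝ)) := by
    have h8 : ε * (8*(N:ℝ)) ≤ 1 := by
      have := mul_le_mul_of_nonneg_right hεN (by positivity : (0:ℝ) ≤ 8*(N:ℝ))
      rwa [one_div_mul_cancel (by positivity)] at this
    rw [div_le_div_iff₀ (by linarith) (by positivity)]
    nlinarith
  unfold setDist
  apply le_csInf
  · obtain ⟨u, hu, hvu⟩ := aux_exists_leaf hV hv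
    obtain ⟨u', hu', hvu'⟩ := aux_exists_leaf hV hv'
    exact ⟨_, pt (Psi N W u) (W u), ⟨u, hu, hvu, rfl⟩,
      pt (Psi N W u') (W u'), ⟨u', hu', hvu', rfl⟩, rfl⟩
  · rintro d ⟨x, ⟨u, hu, hvu, rfl⟩, y, ⟨u', hu', hvu', rfl⟩, rfl⟩
    obtain ⟨t, ht⟩ := hwa.trans hvu
    obtain ⟨t', ht'⟩ := hwb.trans hvu'
    have hu1 : u = w ++ a :: t := by rw [← ht]; simp
    have hu1' : u' = w ++ b :: t' := by rw [← ht']; simp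
    subst hu1; subst hu1'
    obtain ⟨hR0, hR1⟩ := aux_tail hV hW hε0 hε1 hN w a t hu.1
    obtain ⟨hR0', hR1'⟩ := aux_tail hV hW hε0 hε1 hN w b t' hu'.1
    set R := ∑ j ∈ Finset.range t.length,
      W ((w ++ a :: t).take (w.length + (j+1))) * (t.getD j 0 : ℝ) / ((N:ℝ)-1) with hRdef
    set R' := ∑ j ∈ Finset.range t'.length,
      W ((w ++ b :: t').take (w.length + (j+1))) * (t'.getD j 0 : ℝ) / ((N:ℝ)-1) with hRdef'
    have hX : Psi N W (w ++ a :: t) - Psi N W (w ++ b :: t')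
        = ((a:ℝ) - (b:ℝ)) * (W w/((N:ℝ)-1)) + (R - R') := by
      rw [aux_psi, aux_psi, ← hRdef, ← hRdef']; ring
    have habs : (1:ℝ) ≤ |(a:ℝ) - (b:ℝ)| := by
      rcases Nat.lt_or_ge a b with h | h
      · have hc : (a:ℝ) + 1 ≤ (b:ℝ) := by exact_mod_cast h
        rw [abs_sub_comm, abs_of_nonneg (by linarith)]; linarith
      · have h' : b < a := lt_of_le_of_ne h fun e => hab e.symm
        have hc : (b:ℝ) + 1 ≤ (a:ℝ) := by exact_mod_cast h'
        rw [abs_of_nonneg (by linarith)]; linarith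
    have hdivnn : (0:ℝ) ≤ W w/((N:ℝ)-1) := by
      apply div_nonneg hWw.le; linarith
    have hEnn : (0:ℝ) ≤ ε/(1-ε) * W w := hR0.trans hR1
    have hlow : W w/((N:ℝ)-1) - 2*(ε/(1-ε))*W w
        ≤ |Psi N W (w ++ a :: t) - Psi N W (w ++ b :: t')| := by
      rw [hX]
      set X := ((a:ℝ) - (b:ℝ)) * (W w/((N:ℝ)-1)) with hXdef
      have htri : |X| - |R - R'| ≤ |X + (R - R')| := by
        have h := abs_add_le (X + (R - R')) (-(R - R'))
        rw [add_neg_cancel_right, abs_neg] at h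
        linarith
      have hXabs : |X| = |(a:ℝ) - (b:ℝ)| * (W w/((N:ℝ)-1)) := by
        rw [hXdef, abs_mul, abs_of_nonneg hdivnn]
      have hX1 : W w/((N:ℝ)-1) ≤ |X| := by
        rw [hXabs]
        nlinarith
      have hRR : |R - R'| ≤ 2*(ε/(1-ε))*W w := by
        rw [abs_le]
        constructor <;> nlinarith
      linarith
    have hnum : (1/3) * ((N:ℝ))⁻¹ * (2*W w)
        ≤ W w/((N:ℝ)-1) - 2*(ε/(1-ε))*W w := by
      have h1 : W w/(N:ℝ) ≤ W w/((N:ℝ)-1) :=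
        div_le_div_of_nonneg_left hWw.le (by linarith) (by linarith)
      have h2 : 2*(ε/(1-ε))*W w ≤ 2*(2/(15*(N:ℝ)))*W w := by nlinarith
      have e1 : (1/3)*((N:ℝ))⁻¹*(2*W w) = (2/3)*(W w * ((N:ℝ))⁻¹) := by ring
      have e2 : W w/(N:ℝ) = W w * ((N:ℝ))⁻¹ := div_eq_mul_inv _ _
      have e3 : 2*(2/(15*(N:ℝ)))*W w = (4/15)*(W w * ((N:ℝ))⁻¹) := by
        ring
      have hx0 : (0:ℝ) ≤ W w * ((N:ℝ))⁻¹ := by positivity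
      rw [e1]
      have : (2/3)*(W w * ((N:ℝ))⁻¹) ≤ W w/(N:ℝ) - 2*(2/(15*(N:ℝ)))*W w := by
        rw [e2, e3]; linarith
      linarith
    calc (1/3) * ((N:ℝ))⁻¹ * (W v.dropLast + W v'.dropLast)
        ≤ (1/3) * ((N:ℝ))⁻¹ * (2*W w) := by
          apply mul_le_mul_of_nonneg_left (by linarith) (by positivity)
      _ ≤ W w/((N:ℝ)-1) - 2*(ε/(1-ε))*W w := hnum
      _ ≤ |Psi N W (w ++ a :: t) - Psi N W (w ++ b :: t')| := hlow
      _ ≤ dist (pt (Psi N W (w ++ a :: t)) (W (w ++ a :: t)))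
            (pt (Psi N W (w ++ b :: t')) (W (w ++ b :: t'))) := aux_dist _ _ _ _
end

section
/- For every κ ≥ 4 there exists k₀ = k₀(κ) > 0 such that the following holds. Fix N ≥ 2, an N-ary tree V of depth L ≥ 1, and radially decaying weights with parameter ε ≤ k₀/N; fix points y_C ∈ C for each C ∈ 𝒞 and let B_C = B(y_C, κ·K₁·W_C), where K₁ > 1 is an absolute constant (independent of κ) chosen so that C ⊂ κ^{−1}B_C for every C ∈ 𝒞. Then κ·B_C ⊂ B_{π(C)} for every C ∈ 𝒞₀. -/
open MeasureTheory Set Metric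
open scoped Classical

section AuxStatement13

variable {k₀ : ℝ} {N : ℕ} {V : Finset (List ℕ)} {W : List ℕ → ℝ} {ε : ℝ}

lemma aux13_mem_of_prefix (hT : TreeHyp k₀ N V W ε) {u p : List ℕ} (hu : u ∈ V)
    (hp : p <+: u) : p ∈ V :=
  hT.2.1.2.1 u hu p hp

lemma aux13_W_pos (hT : TreeHyp k₀ N V W ε) {v : List ℕ} (hv : v ∈ V) : 0 < W v :=
  hT.2.2.2.2.2.1 v hv

lemma aux13_dropLast_take {l : List ℕ} {n : ℕ} (h : n + 1 ≤ l.length) :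
    (l.take (n + 1)).dropLast = l.take n := by
  rw [List.dropLast_eq_take, List.take_take]
  congr 1
  simp
  omega

lemma aux13_take_ne_nil {l : List ℕ} {n : ℕ} (h : 0 < n) (h2 : 0 < l.length) :
    l.take n ≠ [] := by
  intro hn
  have := congrArg List.length hn
  rw [List.length_take, List.length_nil] at this
  omega

lemma aux13_W_take_decay (hT : TreeHyp k₀ N V W ε) {u : List ℕ} (hu : u ∈ V)
    (d j : ℕ) (h : d + j ≤ u.length) :
    W (u.take (d + j)) ≤ ε ^ j * W (u.take d) := by
  induction j with
  | zero => simp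
  | succ j ih =>
    have h' : d + j ≤ u.length := by omega
    have hmem : u.take (d + (j + 1)) ∈ V :=
      aux13_mem_of_prefix hT hu (List.take_prefix _ _)
    have hne : u.take (d + (j + 1)) ≠ [] := aux13_take_ne_nil (by omega) (by omega)
    have hdec := hT.2.2.2.2.2.2 _ hmem hne
    have hdl : (u.take (d + (j + 1))).dropLast = u.take (d + j) := by
      have : d + (j + 1) = (d + j) + 1 := by omega
      rw [this, aux13_dropLast_take (by omega)]
    rw [hdl] at hdec
    calc W (u.take (d + (j + 1))) ≤ ε * W (u.take (d + j)) := hdec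
      _ ≤ ε * (ε ^ j * W (u.take d)) :=
        mul_le_mul_of_nonneg_left (ih h') hT.2.2.1.le
      _ = ε ^ (j + 1) * W (u.take d) := by ring

lemma aux13_geom_le_two {ε : ℝ} (hε : 0 ≤ ε) (hε2 : ε ≤ 1 / 2) (m : ℕ) :
    ∑ j ∈ Finset.range m, ε ^ j ≤ 2 := by
  have hne : ε ≠ 1 := by linarith
  rw [geom_sum_eq hne, div_le_iff_of_neg (by linarith : ε - 1 < 0)]
  have := pow_nonneg hε m
  linarith

lemma aux13_psi_take_le (hT : TreeHyp k₀ N V W ε) (hε2 : ε ≤ 1 / 2) {u : List ℕ}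
    (hu : u ∈ V) (d : ℕ) (hd : d ≤ u.length) :
    Psi N W (u.take d) ≤ Psi N W u ∧
      Psi N W u ≤ Psi N W (u.take d) + 2 * W (u.take d) := by
  have hN : 2 ≤ N := hT.1
  have hN1 : (1 : ℝ) ≤ (N : ℝ) - 1 := by
    have : (2 : ℝ) ≤ (N : ℝ) := by exact_mod_cast hN
    linarith
  have hε : 0 < ε := hT.2.2.1
  set n := u.length with hn
  set f : ℕ → ℝ := fun i => W (u.take i) * (u.getD i 0 : ℝ) / ((N : ℝ) - 1) with hf
  have hWd : 0 < W (u.take d) := aux13_W_pos hT (aux13_mem_of_prefix hT hu (List.take_prefix _ _))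
  have hPsiu : Psi N W u = ∑ i ∈ Finset.range n, f i := rfl
  have hPsiv : Psi N W (u.take d) = ∑ i ∈ Finset.range d, f i := by
    unfold Psi
    rw [List.length_take, min_eq_left hd]
    apply Finset.sum_congr rfl
    intro i hi
    simp only [Finset.mem_range] at hi
    have h1 : (u.take d).take i = u.take i := by
      rw [List.take_take]; congr 1; omega
    have h2 : (u.take d).getD i 0 = u.getD i 0 := by
      simp [List.getD, List.getElem?_take, hi]
    rw [h1, h2]
  have hsplit : ∑ i ∈ Finset.range d, f i + ∑ i ∈ Finset.Ico d n, f i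
      = ∑ i ∈ Finset.range n, f i := by
    rw [Finset.range_eq_Ico, Finset.range_eq_Ico]
    exact Finset.sum_Ico_consecutive f (Nat.zero_le d) hd
  have hterm_nonneg : ∀ i ∈ Finset.Ico d n, 0 ≤ f i := by
    intro i hi
    obtain ⟨hdi, hin⟩ := Finset.mem_Ico.mp hi
    have hWi : 0 < W (u.take i) :=
      aux13_W_pos hT (aux13_mem_of_prefix hT hu (List.take_prefix _ _))
    exact div_nonneg (mul_nonneg hWi.le (Nat.cast_nonneg _)) (by linarith)
  have hterm_le : ∀ i ∈ Finset.Ico d n, f i ≤ ε ^ (i - d) * W (u.take d) := by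
    intro i hi
    obtain ⟨hdi, hin⟩ := Finset.mem_Ico.mp hi
    have hWi : 0 < W (u.take i) :=
      aux13_W_pos hT (aux13_mem_of_prefix hT hu (List.take_prefix _ _))
    have hWdec : W (u.take i) ≤ ε ^ (i - d) * W (u.take d) := by
      have := aux13_W_take_decay hT hu d (i - d) (by omega)
      rwa [Nat.add_sub_cancel' hdi] at this
    have hdig : (u.getD i 0 : ℝ) ≤ (N : ℝ) - 1 := by
      have hlt : u.getD i 0 < N := by
        rw [List.getD_eq_getElem u 0 hin]
        exact hT.2.1.2.2.1 u hu _ (List.getElem_mem hin)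
      have : (u.getD i 0 : ℝ) + 1 ≤ (N : ℝ) := by exact_mod_cast hlt
      linarith
    calc f i = W (u.take i) * ((u.getD i 0 : ℝ) / ((N : ℝ) - 1)) := by
          simp only [hf]; ring
      _ ≤ W (u.take i) * 1 := by
          apply mul_le_mul_of_nonneg_left _ hWi.le
          rw [div_le_one (by linarith)]
          exact hdig
      _ = W (u.take i) := mul_one _
      _ ≤ ε ^ (i - d) * W (u.take d) := hWdec
  have hsum_nonneg : 0 ≤ ∑ i ∈ Finset.Ico d n, f i := Finset.sum_nonneg hterm_nonneg
  have hsum_le : ∑ i ∈ Finset.Ico d n, f i ≤ 2 * W (u.take d) := by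
    calc ∑ i ∈ Finset.Ico d n, f i
        ≤ ∑ i ∈ Finset.Ico d n, ε ^ (i - d) * W (u.take d) := Finset.sum_le_sum hterm_le
      _ = (∑ j ∈ Finset.range (n - d), ε ^ j) * W (u.take d) := by
          rw [Finset.sum_Ico_eq_sum_range, Finset.sum_mul]
          apply Finset.sum_congr rfl
          intro j _
          rw [Nat.add_sub_cancel_left]
      _ ≤ 2 * W (u.take d) := by
          apply mul_le_mul_of_nonneg_right _ hWd.le
          exact aux13_geom_le_two hε.le hε2 _
  constructor
  · rw [hPsiu, hPsiv]; linarith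
  · rw [hPsiu, hPsiv]; linarith

lemma aux13_cluster_bounds (hT : TreeHyp k₀ N V W ε) (hε2 : ε ≤ 1 / 2) {v : List ℕ}
    {x : Pt} (hx : x ∈ Cluster N V W v) :
    Psi N W v ≤ x 0 ∧ x 0 ≤ Psi N W v + 2 * W v ∧ 0 < x 1 ∧ x 1 ≤ W v := by
  obtain ⟨u, hleaf, hpre, rfl⟩ := hx
  have hu : u ∈ V := hleaf.1
  have hd : v.length ≤ u.length := hpre.length_le
  have hv : v = u.take v.length := List.prefix_iff_eq_take.mp hpre
  have hx0 : pt (Psi N W u) (W u) 0 = Psi N W u := by simp [pt]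
  have hx1 : pt (Psi N W u) (W u) 1 = W u := by simp [pt]
  rw [hx0, hx1, hv]
  obtain ⟨h1, h2⟩ := aux13_psi_take_le hT hε2 hu v.length hd
  refine ⟨h1, h2, aux13_W_pos hT hu, ?_⟩
  have hdec := aux13_W_take_decay hT hu v.length (u.length - v.length) (by omega)
  rw [Nat.add_sub_cancel' hd, List.take_length] at hdec
  have hεpow : ε ^ (u.length - v.length) ≤ 1 := pow_le_one₀ hT.2.2.1.le (by linarith)
  have hWv : 0 < W (u.take v.length) :=
    aux13_W_pos hT (aux13_mem_of_prefix hT hu (List.take_prefix _ _))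
  nlinarith

lemma aux13_cluster_dist (hT : TreeHyp k₀ N V W ε) (hε2 : ε ≤ 1 / 2) {v : List ℕ}
    {x x' : Pt} (hx : x ∈ Cluster N V W v) (hx' : x' ∈ Cluster N V W v) :
    dist x x' ≤ 3 * W v := by
  obtain ⟨a1, a2, a3, a4⟩ := aux13_cluster_bounds hT hε2 hx
  obtain ⟨b1, b2, b3, b4⟩ := aux13_cluster_bounds hT hε2 hx'
  have hW : 0 < W v := lt_of_lt_of_le a3 a4
  rw [EuclideanSpace.dist_eq, Fin.sum_univ_two]
  have h0 : dist (x 0) (x' 0) ≤ 2 * W v := by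
    rw [Real.dist_eq]
    exact abs_le.mpr ⟨by linarith, by linarith⟩
  have h1 : dist (x 1) (x' 1) ≤ W v := by
    rw [Real.dist_eq]
    exact abs_le.mpr ⟨by linarith, by linarith⟩
  have h0n : (0 : ℝ) ≤ dist (x 0) (x' 0) := dist_nonneg
  have h1n : (0 : ℝ) ≤ dist (x 1) (x' 1) := dist_nonneg
  have hsq : dist (x 0) (x' 0) ^ 2 + dist (x 1) (x' 1) ^ 2 ≤ (3 * W v) ^ 2 := by
    nlinarith
  calc √(dist (x 0) (x' 0) ^ 2 + dist (x 1) (x' 1) ^ 2)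
      ≤ √((3 * W v) ^ 2) := Real.sqrt_le_sqrt hsq
    _ = 3 * W v := Real.sqrt_sq (by linarith)

end AuxStatement13

/-- property (B2) of the cluster balls: `κB_C ⊂ B_{π(C)}`. -/
theorem statement13 :
    ∃ K₁ : ℝ, 1 < K₁ ∧
      ∀ κ : ℝ, 4 ≤ κ →
        ∃ k₀ : ℝ, 0 < k₀ ∧
          ∀ (N : ℕ) (V : Finset (List ℕ)) (W : List ℕ → ℝ) (ε : ℝ) (y : List ℕ → Pt),
            TreeHyp k₀ N V W ε → DepthAtLeastOne V →
            (∀ v ∈ V, y v ∈ Cluster N V W v) →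
              (∀ v ∈ V, Cluster N V W v ⊆ closedBall (y v) (K₁ * W v)) ∧
              (∀ v ∈ V, v ≠ [] →
                closedBall (y v) (κ * (κ * K₁ * W v)) ⊆
                  closedBall (y v.dropLast) (κ * K₁ * W v.dropLast)) := by
  refine ⟨3, by norm_num, ?_⟩
  intro κ hκ
  refine ⟨2 * (κ - 1) / κ ^ 2, ?_, ?_⟩
  · have h1 : 0 < κ - 1 := by linarith
    positivity
  intro N V W ε y hT _ hy
  have hN : 2 ≤ N := hT.1
  have hNR : (2 : ℝ) ≤ (N : ℝ) := by exact_mod_cast hN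
  have hε : 0 < ε := hT.2.2.1
  have hκ2 : (0 : ℝ) < κ ^ 2 := by positivity
  have hεκ : ε ≤ (κ - 1) / κ ^ 2 := by
    have h1 := hT.2.2.2.1
    have h2 : 2 * (κ - 1) / κ ^ 2 / (N : ℝ) ≤ 2 * (κ - 1) / κ ^ 2 / 2 := by
      apply div_le_div_of_nonneg_left _ (by norm_num) hNR
      have : 0 < κ - 1 := by linarith
      positivity
    have h3 : 2 * (κ - 1) / κ ^ 2 / 2 = (κ - 1) / κ ^ 2 := by ring
    linarith
  have hε2 : ε ≤ 1 / 2 := by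
    have h4 : (κ - 1) / κ ^ 2 ≤ 1 / 2 := by
      rw [div_le_div_iff₀ hκ2 (by norm_num)]
      nlinarith [sq_nonneg (κ - 1)]
    linarith
  have hεκ' : ε * κ ^ 2 ≤ κ - 1 := (le_div_iff₀ hκ2).mp hεκ
  constructor
  · intro v hv x hx
    rw [mem_closedBall]
    exact aux13_cluster_dist hT hε2 hx (hy v hv)
  · intro v hv hvne x hx
    rw [mem_closedBall] at hx ⊢
    have hp : v.dropLast ∈ V := aux13_mem_of_prefix hT hv (List.dropLast_prefix v)
    have hyv : y v ∈ Cluster N V W v := hy v hv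
    have hyv' : y v ∈ Cluster N V W v.dropLast := by
      obtain ⟨u, hl, hpre, he⟩ := hyv
      exact ⟨u, hl, (List.dropLast_prefix v).trans hpre, he⟩
    have hyp : y v.dropLast ∈ Cluster N V W v.dropLast := hy _ hp
    have hd : dist (y v) (y v.dropLast) ≤ 3 * W v.dropLast :=
      aux13_cluster_dist hT hε2 hyv' hyp
    have hWp : 0 < W v.dropLast := aux13_W_pos hT hp
    have hWv : W v ≤ ε * W v.dropLast := hT.2.2.2.2.2.2 v hv hvne
    have htri := dist_triangle x (y v) (y v.dropLast)
    have hmul : 3 * κ * κ * W v ≤ 3 * κ * κ * (ε * W v.dropLast) := by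
      apply mul_le_mul_of_nonneg_left hWv
      nlinarith
    have hmul2 : ε * κ ^ 2 * W v.dropLast ≤ (κ - 1) * W v.dropLast :=
      mul_le_mul_of_nonneg_right hεκ' hWp.le
    nlinarith
end

section
/- Let K₀ > 1 be any fixed constant. There is a constant κ₁ = κ₁(K₀) such that for every κ ≥ κ₁ there exist k₀ = k₀(κ,K₀) > 0 and an absolute constant k > 0 with the following property. Fix N ≥ 2, an N-ary tree V of depth L ≥ 1, and radially decaying weights with parameter ε ≤ k₀/N; fix points y_C ∈ C for each C ∈ 𝒞 and let B_C = B(y_C, κ·K₁·W_C), where K₁ > 1 is an absolute constant chosen so that C ⊂ κ^{−1}B_C for every C ∈ 𝒞. Then for any disjoint C, C' ∈ 𝒞₀, dist(K₀B_C, K₀B_{C'}) ≥ k·N^{−1}·(W_{π(C)} + W_{π(C')}). In particular, the balls {K₀B_C : C ∈ ∂𝒞} are pairwise disjoint, and for each fixed depth ℓ the balls {K₀B_C : C ∈ 𝒞, d(C) = ℓ} are pairwise disjoint. -/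
open MeasureTheory Set Metric
open scoped Classical

namespace St14

/-- Repackaged standing hypotheses. -/
structure Hyp (N : ℕ) (V : Finset (List ℕ)) (W : List ℕ → ℝ) (ε : ℝ) : Prop where
  hN : 2 ≤ N
  pref : ∀ v ∈ V, ∀ u : List ℕ, u <+: v → u ∈ V
  digit : ∀ v ∈ V, ∀ i ∈ v, i < N
  epos : 0 < ε
  esmall : ε ≤ 1 / (4 * N)
  Wpos : ∀ v ∈ V, 0 < W v
  Wdec : ∀ v ∈ V, v ≠ [] → W v ≤ ε * W v.dropLast

variable {N : ℕ} {V : Finset (List ℕ)} {W : List ℕ → ℝ} {ε : ℝ}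

theorem Hyp.hNR (hH : Hyp N V W ε) : (2 : ℝ) ≤ (N : ℝ) := by
  exact_mod_cast Nat.cast_le.mpr hH.hN

theorem Hyp.ele (hH : Hyp N V W ε) : ε ≤ 1 / 8 := by
  have h := hH.hNR
  have : (1 : ℝ) / (4 * N) ≤ 1 / 8 := by
    apply div_le_div_of_nonneg_left (by norm_num) (by norm_num) (by linarith)
  linarith [hH.esmall]

theorem W_mono_aux (hH : Hyp N V W ε) (s : List ℕ) :
    ∀ t : List ℕ, s ++ t ∈ V → W (s ++ t) ≤ W s := by
  intro t
  induction t using List.reverseRecOn with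
  | nil => intro _; simp
  | append_singleton t a ih =>
    intro hu
    rw [← List.append_assoc] at hu
    have hmem : s ++ t ∈ V := hH.pref _ hu _ ⟨[a], by simp⟩
    have h2 : W (s ++ t ++ [a]) ≤ ε * W (s ++ t) := by
      have h := hH.Wdec (s ++ t ++ [a]) hu (by simp)
      rwa [List.dropLast_concat] at h
    have h3 := ih hmem
    have h4 := hH.Wpos _ hmem
    have h5 := hH.ele
    rw [← List.append_assoc]
    nlinarith [hH.epos]

theorem W_mono (hH : Hyp N V W ε) {v s : List ℕ} (hv : v ∈ V) (hs : s <+: v) :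
    W v ≤ W s := by
  obtain ⟨t, rfl⟩ := hs
  exact W_mono_aux hH s t hv

theorem take_dropLast {v : List ℕ} {i : ℕ} (hi : i < v.length) :
    (v.take (i + 1)).dropLast = v.take i ∧ v.take (i + 1) = v.take i ++ [v[i]] := by
  have h : v.take (i + 1) = v.take i ++ [v[i]] := by
    rw [List.take_succ, List.getElem?_eq_getElem hi]
    rfl
  exact ⟨by rw [h, List.dropLast_concat], h⟩

theorem W_step (hH : Hyp N V W ε) {v s : List ℕ} (hv : v ∈ V) (hs : s <+: v)
    (hne : s ≠ v) : W v ≤ ε * W s := by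
  have hlt : s.length < v.length :=
    lt_of_le_of_ne hs.length_le (fun h => hne (hs.eq_of_length h))
  obtain ⟨hdl, hcc⟩ := take_dropLast hlt
  have hcpre : v.take (s.length + 1) <+: v := List.take_prefix _ _
  have hcV : v.take (s.length + 1) ∈ V := hH.pref _ hv _ hcpre
  have hts : v.take s.length = s := (List.prefix_iff_eq_take.mp hs).symm
  have hcne : v.take (s.length + 1) ≠ [] := by
    have hl : (v.take (s.length + 1)).length = s.length + 1 := by
      rw [List.length_take]; omega
    intro h; rw [h] at hl; simp at hl
  have h1 : W v ≤ W (v.take (s.length + 1)) := W_mono hH hv hcpre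
  have h2 := hH.Wdec _ hcV hcne
  rw [hdl, hts] at h2
  linarith

theorem W_decay (hH : Hyp N V W ε) {v s : List ℕ} (hv : v ∈ V) (hs : s <+: v) :
    ∀ i, s.length ≤ i → i ≤ v.length → W (v.take i) ≤ ε ^ (i - s.length) * W s := by
  intro i hi
  induction i, hi using Nat.le_induction with
  | base =>
    intro _
    rw [← List.prefix_iff_eq_take.mp hs]
    simp
  | succ i hsi ih =>
    intro hi1
    have hi : i < v.length := by omega
    obtain ⟨hdl, hcc⟩ := take_dropLast hi
    have hcV : v.take (i + 1) ∈ V := hH.pref _ hv _ (List.take_prefix _ _)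
    have hcne : v.take (i + 1) ≠ [] := by
      have hl : (v.take (i + 1)).length = i + 1 := by rw [List.length_take]; omega
      intro h; rw [h] at hl; simp at hl
    have h2 := hH.Wdec _ hcV hcne
    rw [hdl] at h2
    have h3 := ih (by omega)
    have h4 : ε * W (v.take i) ≤ ε * (ε ^ (i - s.length) * W s) :=
      mul_le_mul_of_nonneg_left h3 hH.epos.le
    have h5 : ε * (ε ^ (i - s.length) * W s) = ε ^ (i + 1 - s.length) * W s := by
      rw [show i + 1 - s.length = (i - s.length) + 1 from by omega, pow_succ]
      ring
    linarith

theorem geom_le_two {x : ℝ} (h0 : 0 ≤ x) (h1 : x ≤ 1 / 2) (n : ℕ) :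
    ∑ j ∈ Finset.range n, x ^ j ≤ 2 := by
  induction n with
  | zero => simp
  | succ n ih =>
    rw [geom_sum_succ]
    have hS : 0 ≤ ∑ j ∈ Finset.range n, x ^ j :=
      Finset.sum_nonneg fun j _ => pow_nonneg h0 j
    nlinarith

theorem Psi_split {s v : List ℕ} (hs : s <+: v) :
    Psi N W v = Psi N W s +
      ∑ i ∈ Finset.Ico s.length v.length,
        W (v.take i) * ((v.getD i 0 : ℕ) : ℝ) / ((N : ℝ) - 1) := by
  obtain ⟨t, rfl⟩ := hs
  unfold Psi
  rw [Finset.range_eq_Ico,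
    ← Finset.sum_Ico_consecutive _ (Nat.zero_le s.length) (by simp)]
  congr 1
  rw [← Finset.range_eq_Ico]
  apply Finset.sum_congr rfl
  intro i hi
  have hi' : i < s.length := Finset.mem_range.mp hi
  rw [List.take_append_of_le_length hi'.le, List.getD_append _ _ _ _ hi']

theorem digit_le (hH : Hyp N V W ε) {v : List ℕ} (hv : v ∈ V) {i : ℕ}
    (hi : i < v.length) : ((v.getD i 0 : ℕ) : ℝ) ≤ (N : ℝ) - 1 := by
  rw [List.getD_eq_getElem v 0 hi]
  have h1 : v[i] < N := hH.digit v hv _ (List.getElem_mem hi)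
  have h2 : v[i] ≤ N - 1 := by omega
  have h3 : ((N - 1 : ℕ) : ℝ) = (N : ℝ) - 1 := by
    have : 1 ≤ N := le_trans (by norm_num) hH.hN
    push_cast [this]; ring
  rw [← h3]
  exact_mod_cast h2

theorem Psi_term_nonneg (hH : Hyp N V W ε) {v : List ℕ} (hv : v ∈ V) (i : ℕ) :
    0 ≤ W (v.take i) * ((v.getD i 0 : ℕ) : ℝ) / ((N : ℝ) - 1) := by
  have h1 : 0 < W (v.take i) := hH.Wpos _ (hH.pref _ hv _ (List.take_prefix _ _))
  have h2 : (0 : ℝ) < (N : ℝ) - 1 := by linarith [hH.hNR]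
  positivity

theorem Psi_bounds (hH : Hyp N V W ε) {v s : List ℕ} (hv : v ∈ V) (hs : s <+: v) :
    Psi N W s ≤ Psi N W v ∧ Psi N W v ≤ Psi N W s + 2 * W s := by
  have hsplit := Psi_split (N := N) (W := W) hs
  have hsV : s ∈ V := hH.pref _ hv _ hs
  have hWs : 0 < W s := hH.Wpos _ hsV
  have hN1 : (0 : ℝ) < (N : ℝ) - 1 := by linarith [hH.hNR]
  constructor
  · rw [hsplit]
    have : 0 ≤ ∑ i ∈ Finset.Ico s.length v.length,
        W (v.take i) * ((v.getD i 0 : ℕ) : ℝ) / ((N : ℝ) - 1) :=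
      Finset.sum_nonneg fun i _ => Psi_term_nonneg hH hv i
    linarith
  · rw [hsplit]
    have hb1 : ∑ i ∈ Finset.Ico s.length v.length,
        W (v.take i) * ((v.getD i 0 : ℕ) : ℝ) / ((N : ℝ) - 1)
        ≤ ∑ i ∈ Finset.Ico s.length v.length, ε ^ (i - s.length) * W s := by
      apply Finset.sum_le_sum
      intro i hi
      obtain ⟨hi1, hi2⟩ := Finset.mem_Ico.mp hi
      have hWt : 0 < W (v.take i) :=
        hH.Wpos _ (hH.pref _ hv _ (List.take_prefix _ _))
      have hdig := digit_le hH hv hi2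
      have hdig0 : (0:ℝ) ≤ ((v.getD i 0 : ℕ) : ℝ) := Nat.cast_nonneg _
      have ht : W (v.take i) * ((v.getD i 0 : ℕ) : ℝ) / ((N : ℝ) - 1)
          ≤ W (v.take i) := by
        rw [div_le_iff₀ hN1]
        nlinarith
      have := W_decay hH hv hs i hi1 hi2.le
      linarith
    have hb2 : ∑ i ∈ Finset.Ico s.length v.length, ε ^ (i - s.length) * W s
        ≤ 2 * W s := by
      rw [Finset.sum_Ico_eq_sum_range]
      have : ∀ k ∈ Finset.range (v.length - s.length),
          ε ^ (s.length + k - s.length) * W s = ε ^ k * W s := by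
        intro k _; congr 2; omega
      rw [Finset.sum_congr rfl this, ← Finset.sum_mul]
      have hg := geom_le_two hH.epos.le (le_trans hH.ele (by norm_num))
        (v.length - s.length)
      nlinarith
    linarith

theorem Psi_child (hH : Hyp N V W ε) (s : List ℕ) (a : ℕ) :
    Psi N W (s ++ [a]) = Psi N W s + W s * (a : ℝ) / ((N : ℝ) - 1) := by
  have hs : s <+: s ++ [a] := ⟨[a], rfl⟩
  rw [Psi_split (N := N) (W := W) hs]
  have hlen : (s ++ [a]).length = s.length + 1 := by simp
  rw [hlen, Finset.sum_Ico_eq_sum_range]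
  simp [List.take_append_of_le_length (le_refl s.length)]

end St14

namespace St14

variable {N : ℕ} {V : Finset (List ℕ)} {W : List ℕ → ℝ} {ε : ℝ}

/-- Horizontal separation of the clusters below two siblings' subtrees. -/
theorem sep (hH : Hyp N V W ε) {v v' s u u' : List ℕ} {a b : ℕ} {t t' : List ℕ}
    (hd : v = s ++ a :: t) (hd' : v' = s ++ b :: t') (hab : a < b)
    (hu : u ∈ V) (huv : v <+: u) (hu' : u' ∈ V) (huv' : v' <+: u') :
    W s / (2 * N) ≤ Psi N W u' - Psi N W u := by
  have hsa : s ++ [a] <+: u := by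
    apply List.IsPrefix.trans _ huv
    rw [hd]; exact ⟨t, by simp⟩
  have hsb : s ++ [b] <+: u' := by
    apply List.IsPrefix.trans _ huv'
    rw [hd']; exact ⟨t', by simp⟩
  have hsV : s ∈ V := hH.pref _ hu _ ((List.prefix_append s [a]).trans hsa)
  have hsaV : s ++ [a] ∈ V := hH.pref _ hu _ hsa
  have hWs : 0 < W s := hH.Wpos _ hsV
  have hWsa : W (s ++ [a]) ≤ ε * W s :=
    W_step hH hsaV ⟨[a], rfl⟩ (by simp)
  have h1 : Psi N W u ≤ Psi N W (s ++ [a]) + 2 * W (s ++ [a]) :=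
    (Psi_bounds hH hu hsa).2
  have h2 : Psi N W (s ++ [b]) ≤ Psi N W u' := (Psi_bounds hH hu' hsb).1
  rw [Psi_child hH s a] at h1
  rw [Psi_child hH s b] at h2
  have hNR := hH.hNR
  have hN1 : (0 : ℝ) < (N : ℝ) - 1 := by linarith
  have hN0 : (0 : ℝ) < (N : ℝ) := by linarith
  have hba : (a : ℝ) + 1 ≤ (b : ℝ) := by exact_mod_cast Nat.succ_le_of_lt hab
  -- W s / N ≤ W s * (b - a) / (N - 1)
  have k1 : W s / (N : ℝ) ≤ W s / ((N : ℝ) - 1) :=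
    div_le_div_of_nonneg_left hWs.le hN1 (by linarith)
  have k2 : W s / ((N : ℝ) - 1) ≤ W s * ((b : ℝ) - (a : ℝ)) / ((N : ℝ) - 1) := by
    apply (div_le_div_iff_of_pos_right hN1).mpr
    nlinarith
  have k3 : 2 * W (s ++ [a]) ≤ W s / (2 * N) := by
    have he := hH.esmall
    have h5 : ε * W s ≤ (1 / (4 * N)) * W s := mul_le_mul_of_nonneg_right he hWs.le
    have heq : 2 * ((1 / (4 * (N : ℝ))) * W s) = W s / (2 * N) := by ring
    linarith
  have k4 : W s / N - W s / (2 * N) = W s / (2 * N) := by ring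
  have k5 : W s * (b : ℝ) / ((N : ℝ) - 1) - W s * (a : ℝ) / ((N : ℝ) - 1)
      = W s * ((b : ℝ) - (a : ℝ)) / ((N : ℝ) - 1) := by ring
  linarith

/-- If neither of two strings is a prefix of the other, they split at a common
ancestor with distinct next digits. -/
theorem split_of_not_prefix :
    ∀ v v' : List ℕ, ¬ v <+: v' → ¬ v' <+: v →
      ∃ s a t b t', a ≠ b ∧ v = s ++ a :: t ∧ v' = s ++ b :: t' := by
  intro v
  induction v with
  | nil => intro v' h _; exact absurd (List.nil_prefix) h
  | cons x xs ih =>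
    intro v' h h'
    match v' with
    | [] => exact absurd (List.nil_prefix) h'
    | y :: ys =>
      by_cases hxy : x = y
      · subst hxy
        have h1 : ¬ xs <+: ys := fun hp => h (List.cons_prefix_cons.mpr ⟨rfl, hp⟩)
        have h2 : ¬ ys <+: xs := fun hp => h' (List.cons_prefix_cons.mpr ⟨rfl, hp⟩)
        obtain ⟨s, a, t, b, t', hab, e1, e2⟩ := ih ys h1 h2
        exact ⟨x :: s, a, t, b, t', hab, by simp [e1], by simp [e2]⟩
      · exact ⟨[], x, xs, y, ys, hxy, rfl, rfl⟩

/-- Every vertex has a leaf above it. -/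
theorem exists_leaf (hH : Hyp N V W ε) {v : List ℕ} (hv : v ∈ V) :
    ∃ u, IsLeaf V u ∧ v <+: u := by
  classical
  have hne : (V.filter (fun u => v <+: u)).Nonempty := ⟨v, by simp [hv]⟩
  obtain ⟨u, hu, hmax⟩ := Finset.exists_max_image _ List.length hne
  rw [Finset.mem_filter] at hu
  refine ⟨u, ⟨hu.1, fun a ha => ?_⟩, hu.2⟩
  have : u ++ [a] ∈ V.filter (fun u => v <+: u) := by
    rw [Finset.mem_filter]
    exact ⟨ha, hu.2.trans (List.prefix_append u [a])⟩
  have := hmax _ this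
  simp at this

/-- A leaf has no proper descendants in `V`. -/
theorem leaf_prefix_eq (hH : Hyp N V W ε) {v u : List ℕ} (hl : IsLeaf V v)
    (hu : u ∈ V) (hp : v <+: u) : u = v := by
  by_contra hne
  have hlt : v.length < u.length :=
    lt_of_le_of_ne hp.length_le (fun h => hne (hp.eq_of_length h).symm)
  obtain ⟨hdl, hcc⟩ := take_dropLast hlt
  have hts : u.take v.length = v := (List.prefix_iff_eq_take.mp hp).symm
  have hcV : u.take (v.length + 1) ∈ V := hH.pref _ hu _ (List.take_prefix _ _)
  rw [hcc, hts] at hcV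
  exact hl.2 _ hcV

theorem pt0 (a b : ℝ) : pt a b 0 = a := by simp [pt]

theorem pt1 (a b : ℝ) : pt a b 1 = b := by simp [pt]

theorem dist_pt (a b c d : ℝ) :
    dist (pt a b) (pt c d) = Real.sqrt ((a - c) ^ 2 + (b - d) ^ 2) := by
  rw [EuclideanSpace.dist_eq]
  congr 1
  rw [Fin.sum_univ_two]
  rw [show (pt a b) 0 = a from pt0 a b, show (pt a b) 1 = b from pt1 a b,
    show (pt c d) 0 = c from pt0 c d, show (pt c d) 1 = d from pt1 c d]
  rw [Real.dist_eq, Real.dist_eq, sq_abs, sq_abs]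

theorem abs_le_dist_pt (a b c d : ℝ) : |a - c| ≤ dist (pt a b) (pt c d) := by
  rw [dist_pt]
  have h := Real.sqrt_le_sqrt (show (a - c) ^ 2 ≤ (a - c) ^ 2 + (b - d) ^ 2 by
    nlinarith [sq_nonneg (b - d)])
  rwa [Real.sqrt_sq_eq_abs] at h

theorem dist_pt_le {a b c d w : ℝ} (h1 : |a - c| ≤ 2 * w) (h2 : |b - d| ≤ w)
    (hw : 0 ≤ w) : dist (pt a b) (pt c d) ≤ 3 * w := by
  rw [dist_pt]
  have e1 : (a - c) ^ 2 ≤ (2 * w) ^ 2 := by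
    rw [← sq_abs]; exact pow_le_pow_left₀ (abs_nonneg _) h1 2
  have e2 : (b - d) ^ 2 ≤ w ^ 2 := by
    rw [← sq_abs]; exact pow_le_pow_left₀ (abs_nonneg _) h2 2
  have := Real.sqrt_le_sqrt (show (a - c) ^ 2 + (b - d) ^ 2 ≤ (3 * w) ^ 2 by nlinarith)
  rwa [Real.sqrt_sq (by linarith)] at this

end St14

namespace St14

variable {N : ℕ} {V : Finset (List ℕ)} {W : List ℕ → ℝ} {ε : ℝ}

theorem main_dist (hH : Hyp N V W ε) {ρ : ℝ} (hρ : 0 ≤ ρ)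
    (hρε : 2 * ρ * ε ≤ 1 / (8 * N))
    {v v' : List ℕ} (hv : v ∈ V) (hv' : v' ∈ V)
    (hnp : ¬ v <+: v') (hnp' : ¬ v' <+: v)
    {y y' : Pt} (hy : y ∈ Cluster N V W v) (hy' : y' ∈ Cluster N V W v')
    {x x' : Pt} (hx : dist x y ≤ ρ * W v) (hx' : dist x' y' ≤ ρ * W v') :
    1 / 8 * (N : ℝ)⁻¹ * (W v.dropLast + W v'.dropLast) ≤ dist x x' := by
  obtain ⟨s, a, t, b, t', hab, e1, e2⟩ := split_of_not_prefix v v' hnp hnp'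
  obtain ⟨u, hu, huv, hyeq⟩ := hy
  obtain ⟨u', hu', huv', hyeq'⟩ := hy'
  have hsv : s <+: v := by rw [e1]; exact ⟨a :: t, rfl⟩
  have hsv' : s <+: v' := by rw [e2]; exact ⟨b :: t', rfl⟩
  have hsV : s ∈ V := hH.pref _ hv _ hsv
  have hWs : 0 < W s := hH.Wpos _ hsV
  have hNR := hH.hNR
  have hN0 : (0 : ℝ) < (N : ℝ) := by linarith
  -- horizontal separation of the two leaves
  have hsep : W s / (2 * N) ≤ |Psi N W u - Psi N W u'| := by
    rcases lt_or_gt_of_ne hab with h | h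
    · have hs := sep hH e1 e2 h hu.1 huv hu'.1 huv'
      rw [abs_sub_comm]
      exact le_trans hs (le_abs_self _)
    · have hs := sep hH e2 e1 h hu'.1 huv' hu.1 huv
      exact le_trans hs (le_abs_self _)
  have hdyy : W s / (2 * N) ≤ dist y y' := by
    rw [hyeq, hyeq']
    exact le_trans hsep (abs_le_dist_pt _ _ _ _)
  -- weights of v, v' are small compared to W s
  have hsvne : s ≠ v := by
    rw [e1]; intro h
    have := congrArg List.length h
    simp at this
  have hsvne' : s ≠ v' := by
    rw [e2]; intro h
    have := congrArg List.length h
    simp at this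
  have hWv : W v ≤ ε * W s := W_step hH hv hsv hsvne
  have hWv' : W v' ≤ ε * W s := W_step hH hv' hsv' hsvne'
  -- parent weights are at most W s
  have hdv : W v.dropLast ≤ W s := by
    have hp : s <+: v.dropLast := by
      rw [e1, List.dropLast_append_of_ne_nil (by simp)]
      exact ⟨(a :: t).dropLast, rfl⟩
    have hmem : v.dropLast ∈ V := hH.pref _ hv _ (List.dropLast_prefix v)
    exact W_mono hH hmem hp
  have hdv' : W v'.dropLast ≤ W s := by
    have hp : s <+: v'.dropLast := by
      rw [e2, List.dropLast_append_of_ne_nil (by simp)]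
      exact ⟨(b :: t').dropLast, rfl⟩
    have hmem : v'.dropLast ∈ V := hH.pref _ hv' _ (List.dropLast_prefix v')
    exact W_mono hH hmem hp
  -- triangle inequality
  have t1 := dist_triangle y x y'
  have t2 := dist_triangle x x' y'
  have c1 : dist y x = dist x y := dist_comm _ _
  have c2 : dist x' y' = dist x' y' := rfl
  -- radii are small
  have hr1 : ρ * W v ≤ ρ * (ε * W s) := mul_le_mul_of_nonneg_left hWv hρ
  have hr2 : ρ * W v' ≤ ρ * (ε * W s) := mul_le_mul_of_nonneg_left hWv' hρ
  have hr3 : ρ * (ε * W s) + ρ * (ε * W s) = (2 * ρ * ε) * W s := by ring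
  have hr4 : (2 * ρ * ε) * W s ≤ (1 / (8 * N)) * W s :=
    mul_le_mul_of_nonneg_right hρε hWs.le
  -- put everything together
  have hq : 0 ≤ W s * (N : ℝ)⁻¹ := by positivity
  have eq1 : 1 / 8 * (N : ℝ)⁻¹ * (2 * W s) = 1 / 4 * (W s * (N : ℝ)⁻¹) := by ring
  have eq2 : W s / (2 * N) = 1 / 2 * (W s * (N : ℝ)⁻¹) := by ring
  have eq3 : (1 / (8 * (N : ℝ))) * W s = 1 / 8 * (W s * (N : ℝ)⁻¹) := by ring
  have final1 : 1 / 8 * (N : ℝ)⁻¹ * (W v.dropLast + W v'.dropLast)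
      ≤ 1 / 8 * (N : ℝ)⁻¹ * (2 * W s) := by
    apply mul_le_mul_of_nonneg_left (by linarith)
    positivity
  linarith

end St14

open St14

/-- properties (B4), (B5), (B6) of the cluster balls. -/
theorem statement14 :
    ∃ K₁ k : ℝ, 1 < K₁ ∧ 0 < k ∧
      ∀ K₀ : ℝ, 1 < K₀ →
        ∃ κ₁ : ℝ, ∀ κ : ℝ, κ₁ ≤ κ →
          ∃ k₀ : ℝ, 0 < k₀ ∧
            ∀ (N : ℕ) (V : Finset (List ℕ)) (W : List ℕ → ℝ) (ε : ℝ) (y : List ℕ → Pt),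
              TreeHyp k₀ N V W ε → DepthAtLeastOne V →
              (∀ v ∈ V, y v ∈ Cluster N V W v) →
                (∀ v ∈ V, Cluster N V W v ⊆ closedBall (y v) (K₁ * W v)) ∧
                (∀ v ∈ V, v ≠ [] → ∀ v' ∈ V, v' ≠ [] →
                  Disjoint (Cluster N V W v) (Cluster N V W v') →
                    k * (N : ℝ)⁻¹ * (W v.dropLast + W v'.dropLast) ≤
                      setDist (closedBall (y v) (K₀ * (κ * K₁ * W v)))
                        (closedBall (y v') (K₀ * (κ * K₁ * W v')))) ∧
                (∀ v v' : List ℕ, IsLeaf V v → IsLeaf V v' →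
                  Cluster N V W v ≠ Cluster N V W v' →
                    Disjoint (closedBall (y v) (K₀ * (κ * K₁ * W v)))
                      (closedBall (y v') (K₀ * (κ * K₁ * W v')))) ∧
                (∀ v ∈ V, ∀ v' ∈ V, v.length = v'.length →
                  Cluster N V W v ≠ Cluster N V W v' →
                    Disjoint (closedBall (y v) (K₀ * (κ * K₁ * W v)))
                      (closedBall (y v') (K₀ * (κ * K₁ * W v')))) := by
  refine ⟨3, 1/8, by norm_num, by norm_num, ?_⟩
  intro K₀ hK₀
  refine ⟨1, fun κ hκ => ?_⟩
  have hK₀0 : (0 : ℝ) < K₀ := by linarith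
  have hκ0 : (0 : ℝ) < κ := by linarith
  refine ⟨min (1/4) (1/(48 * K₀ * κ)), lt_min (by norm_num) (one_div_pos.mpr (mul_pos (mul_pos (by norm_num : (0:ℝ) < 48) hK₀0) hκ0)), ?_⟩
  intro N V W ε y hT hD hy
  obtain ⟨hN, hTree, hε0, hεk, hRD⟩ := hT
  have hN0 : (0 : ℝ) < (N : ℝ) := by
    have : (2 : ℝ) ≤ (N : ℝ) := by exact_mod_cast hN
    linarith
  have hH : Hyp N V W ε := by
    refine ⟨hN, hTree.2.1, hTree.2.2.1, hε0, ?_, hRD.2.1, hRD.2.2⟩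
    have h1 : ε ≤ (1/4) / N := by
      refine le_trans hεk ?_
      exact (div_le_div_iff_of_pos_right hN0).mpr (min_le_left _ _)
    calc ε ≤ (1/4) / N := h1
      _ = 1 / (4 * N) := by ring
  set ρ : ℝ := K₀ * (κ * 3) with hρdef
  have hρ0 : (0 : ℝ) < ρ := mul_pos hK₀0 (mul_pos hκ0 three_pos)
  have hρε : 2 * ρ * ε ≤ 1 / (8 * N) := by
    have h1 : ε ≤ (1/(48 * K₀ * κ)) / N := by
      refine le_trans hεk ?_
      exact (div_le_div_iff_of_pos_right hN0).mpr (min_le_right _ _)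
    have h2 : 2 * ρ * ε ≤ 2 * ρ * ((1/(48 * K₀ * κ)) / N) :=
      mul_le_mul_of_nonneg_left h1 (by linarith)
    have h3 : 2 * ρ * ((1/(48 * K₀ * κ)) / N) = 1 / (8 * N) := by
      rw [hρdef]
      field_simp
      ring
    linarith
  have hball : ∀ v ∈ V, ∀ x : Pt, x ∈ closedBall (y v) (K₀ * (κ * 3 * W v)) →
      dist x (y v) ≤ ρ * W v := by
    intro v hv x hx
    calc dist x (y v) ≤ K₀ * (κ * 3 * W v) := mem_closedBall.mp hx
      _ = ρ * W v := by rw [hρdef]; ring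
  have hposLHS : ∀ v ∈ V, ∀ v' ∈ V,
      0 < 1 / 8 * (N : ℝ)⁻¹ * (W (List.dropLast v) + W (List.dropLast v')) := by
    intro v hv v' hv'
    have h1 : 0 < W v.dropLast := hH.Wpos _ (hH.pref _ hv _ (List.dropLast_prefix v))
    have h2 : 0 < W v'.dropLast := hH.Wpos _ (hH.pref _ hv' _ (List.dropLast_prefix v'))
    have h3 : (0 : ℝ) < (N : ℝ)⁻¹ := by positivity
    exact mul_pos (mul_pos (by norm_num) h3) (by linarith)
  refine ⟨?_, ?_, ?_, ?_⟩
  -- (1) cluster inside the ball of radius 3 W v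
  · intro v hv x hx
    obtain ⟨u, hu, huv, rfl⟩ := hx
    obtain ⟨u₀, hu₀, hu₀v, hyv⟩ := hy v hv
    have hb := Psi_bounds hH hu.1 huv
    have hb₀ := Psi_bounds hH hu₀.1 hu₀v
    have hWu : W u ≤ W v := W_mono hH hu.1 huv
    have hWu₀ : W u₀ ≤ W v := W_mono hH hu₀.1 hu₀v
    have hWupos : 0 < W u := hH.Wpos _ hu.1
    have hWu₀pos : 0 < W u₀ := hH.Wpos _ hu₀.1
    have hWv : 0 < W v := hH.Wpos _ hv
    rw [mem_closedBall, hyv]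
    exact dist_pt_le (abs_le.mpr ⟨by linarith, by linarith⟩)
      (abs_le.mpr ⟨by linarith, by linarith⟩) hWv.le
  -- (2) setDist lower bound
  · intro v hv hvne v' hv' hvne' hdis
    have np : ¬ v <+: v' := by
      intro hp
      obtain ⟨u, hu, hup⟩ := exists_leaf hH hv'
      exact Set.disjoint_left.mp hdis ⟨u, hu, hp.trans hup, rfl⟩ ⟨u, hu, hup, rfl⟩
    have np' : ¬ v' <+: v := by
      intro hp
      obtain ⟨u, hu, hup⟩ := exists_leaf hH hv
      exact Set.disjoint_left.mp hdis ⟨u, hu, hup, rfl⟩ ⟨u, hu, hp.trans hup, rfl⟩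
    unfold setDist
    apply le_csInf
    · refine ⟨dist (y v) (y v'), y v, mem_closedBall_self ?_, y v',
        mem_closedBall_self ?_, rfl⟩
      · exact (mul_pos hK₀0 (mul_pos (mul_pos hκ0 three_pos) (hH.Wpos _ hv))).le
      · exact (mul_pos hK₀0 (mul_pos (mul_pos hκ0 three_pos) (hH.Wpos _ hv'))).le
    · rintro d ⟨x, hx, x', hx', rfl⟩
      exact main_dist hH hρ0.le hρε hv hv' np np' (hy v hv) (hy v' hv')
        (hball v hv x hx) (hball v' hv' x' hx')
  -- (3) leaves
  · intro v v' hlv hlv' hne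
    have np : ¬ v <+: v' := fun hp => hne (by rw [leaf_prefix_eq hH hlv hlv'.1 hp])
    have np' : ¬ v' <+: v := fun hp => hne (by rw [leaf_prefix_eq hH hlv' hlv.1 hp])
    rw [Set.disjoint_left]
    intro x hx hx'
    have hd := main_dist hH hρ0.le hρε hlv.1 hlv'.1 np np' (hy v hlv.1) (hy v' hlv'.1)
      (hball v hlv.1 x hx) (hball v' hlv'.1 x hx')
    rw [dist_self] at hd
    exact absurd hd (not_le.mpr (hposLHS v hlv.1 v' hlv'.1))
  -- (4) same depth
  · intro v hv v' hv' hlen hne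
    have hvv' : v ≠ v' := fun h => hne (by rw [h])
    have np : ¬ v <+: v' := fun hp => hvv' (hp.eq_of_length hlen)
    have np' : ¬ v' <+: v := fun hp => hvv' (hp.eq_of_length hlen.symm).symm
    rw [Set.disjoint_left]
    intro x hx hx'
    have hd := main_dist hH hρ0.le hρε hv hv' np np' (hy v hv) (hy v' hv')
      (hball v hv x hx) (hball v' hv' x hx')
    rw [dist_self] at hd
    exact absurd hd (not_le.mpr (hposLHS v hv v' hv'))
end
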